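/- arXiv:1802.04482 — 8 statements merged into one kernel-verified Lean document; each statement's English description precedes it below -/
import Mathlib

section
/- Let E be a field containing 𝔽_q, let σ : E → E be the q-power Frobenius x ↦ x^q, let V be a finite-dimensional 𝔽_q-vector space, and let τ : V ⊗_{𝔽_q} E → V ⊗_{𝔽_q} E be the σ-semilinear map id_V ⊗ σ. For an E-subspace L ⊆ V ⊗ E write τ*L for the E-linear span of τ(L). Suppose L is a toy shtuka, i.e. dim_E L − dim_E(L ∩ τ*L) ≤ 1. Let W ⊆ V be an 𝔽_q-subspace, put L' = L ∩ (W ⊗ E) and L'' = image of L under the projection V ⊗ E → (V/W) ⊗ E. Then τ*L' = L' or τ*L'' = L''. -/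
open TensorProduct Module

section Aux

variable {F E : Type*} [Field F] [Fintype F] [Field E] [Algebra F E]

private lemma frob_mul (σ : E →ₗ[F] E) (hσ : ∀ x : E, σ x = x ^ Fintype.card F)
    (a b : E) : σ (a * b) = σ a * σ b := by
  rw [hσ, hσ, hσ, mul_pow]

variable {U U₂ : Type*} [AddCommGroup U] [Module F U] [AddCommGroup U₂] [Module F U₂]

private lemma rTensor_frob_smul (σ : E →ₗ[F] E)
    (hσ : ∀ x : E, σ x = x ^ Fintype.card F) (c : E) (x : E ⊗[F] U) :
    LinearMap.rTensor U σ (c • x) = σ c • LinearMap.rTensor U σ x := by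
  induction x using TensorProduct.induction_on with
  | zero => simp
  | tmul e u =>
      rw [smul_tmul', LinearMap.rTensor_tmul, LinearMap.rTensor_tmul, smul_tmul',
        smul_eq_mul, smul_eq_mul, frob_mul σ hσ]
  | add x y hx hy => rw [smul_add, map_add, map_add, hx, hy, smul_add]

private lemma mem_span_rTensor (σ : E →ₗ[F] E)
    (hσ : ∀ x : E, σ x = x ^ Fintype.card F)
    (s : Set (E ⊗[F] U)) {y : E ⊗[F] U} (hy : y ∈ Submodule.span E s) :
    LinearMap.rTensor U σ y ∈ Submodule.span E (LinearMap.rTensor U σ '' s) := by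
  induction hy using Submodule.span_induction with
  | mem x hx => exact Submodule.subset_span ⟨x, hx, rfl⟩
  | zero => simp
  | add x y _ _ hx hy => rw [map_add]; exact Submodule.add_mem _ hx hy
  | smul c x _ hx =>
      rw [rTensor_frob_smul σ hσ]
      exact Submodule.smul_mem _ _ hx

private lemma span_rTensor_span (σ : E →ₗ[F] E)
    (hσ : ∀ x : E, σ x = x ^ Fintype.card F) (s : Set (E ⊗[F] U)) :
    Submodule.span E (LinearMap.rTensor U σ '' (Submodule.span E s : Set (E ⊗[F] U)))
      = Submodule.span E (LinearMap.rTensor U σ '' s) := by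
  refine le_antisymm (Submodule.span_le.2 ?_) (Submodule.span_mono
    (Set.image_mono Submodule.subset_span))
  rintro _ ⟨y, hy, rfl⟩
  exact mem_span_rTensor σ hσ s hy

private lemma linearIndependent_rTensor [FiniteDimensional F U] (σ : E →ₗ[F] E)
    (hσ : ∀ x : E, σ x = x ^ Fintype.card F) {k : ℕ} {v : Fin k → E ⊗[F] U}
    (hv : LinearIndependent E v) :
    LinearIndependent E (LinearMap.rTensor U σ ∘ v) := by
  classical
  set T := LinearMap.rTensor U σ with hT
  let b := Module.finBasis F U
  let B := b.baseChange E
  have hTB : ∀ j, T (B j) = B j := fun j => by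
    rw [Basis.baseChange_apply, hT, LinearMap.rTensor_tmul, hσ, one_pow]
  obtain ⟨g, hg⟩ := (Finsupp.linearCombination E v).exists_leftInverse_of_injective
    (LinearMap.ker_eq_bot.mpr hv)
  have hgv : ∀ i, g (v i) = Finsupp.single i 1 := by
    intro i
    have h1 : Finsupp.linearCombination E v (Finsupp.single i 1) = v i := by
      rw [Finsupp.linearCombination_single, one_smul]
    have := congrArg (fun φ : (Fin k →₀ E) →ₗ[E] (Fin k →₀ E) =>
      φ (Finsupp.single i 1)) hg
    simpa [h1] using this
  let S : (Fin k →₀ E) → (Fin k →₀ E) := Finsupp.mapRange σ (map_zero σ)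
  have hSapp : ∀ (l : Fin k →₀ E) (i : Fin k), S l i = σ (l i) := fun l i =>
    Finsupp.mapRange_apply
  let h : E ⊗[F] U →ₗ[E] (Fin k →₀ E) := B.constr ℕ (fun j => S (g (B j)))
  have hhB : ∀ j, h (B j) = S (g (B j)) := fun j => B.constr_basis ℕ _ j
  have key : ∀ y, h (T y) = S (g y) := by
    intro y
    have hy : y = ∑ j, B.repr y j • B j := (B.sum_repr y).symm
    rw [hy, map_sum, map_sum]
    have hTj : ∀ j, T (B.repr y j • B j) = σ (B.repr y j) • B j := fun j => by
      rw [rTensor_frob_smul σ hσ, hTB]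
    simp_rw [hTj, map_smul, hhB]
    ext i
    simp only [Finsupp.finset_sum_apply, hSapp, Finsupp.smul_apply, smul_eq_mul, map_sum]
    refine Finset.sum_congr rfl fun x _ => ?_
    rw [map_smul, Finsupp.smul_apply, smul_eq_mul, frob_mul σ hσ]
  rw [Fintype.linearIndependent_iff]
  intro a ha i
  have h0 : h (∑ j, a j • T (v j)) = 0 := by
    simp only [Function.comp] at ha
    rw [ha, map_zero]
  rw [map_sum] at h0
  simp_rw [map_smul, key, hgv] at h0
  have h1 : ∀ j : Fin k, S (Finsupp.single j 1) = Finsupp.single j 1 := fun j => by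
    show Finsupp.mapRange σ (map_zero σ) _ = _
    rw [Finsupp.mapRange_single, hσ, one_pow]
  simp_rw [h1] at h0
  have h2 := congrArg (fun l : Fin k →₀ E => l i) h0
  simpa [Finsupp.finset_sum_apply, Finsupp.single_apply] using h2

private lemma finrank_span_rTensor [FiniteDimensional F U] (σ : E →ₗ[F] E)
    (hσ : ∀ x : E, σ x = x ^ Fintype.card F) (M : Submodule E (E ⊗[F] U)) :
    finrank E (Submodule.span E (LinearMap.rTensor U σ '' (M : Set (E ⊗[F] U)))) =
      finrank E M := by
  classical
  set n := finrank E M with hn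
  haveI : Module.Free E M := Module.Free.of_divisionRing E M
  let bM := finBasis E M
  let v : Fin n → E ⊗[F] U := fun i => (bM i : E ⊗[F] U)
  have hv : LinearIndependent E v :=
    bM.linearIndependent.map_injOn M.subtype Subtype.val_injective.injOn
  have hMspan : M = Submodule.span E (Set.range v) := by
    conv_lhs => rw [← Submodule.map_subtype_top M]
    rw [← bM.span_eq, Submodule.map_span, ← Set.range_comp]
    rfl
  rw [hMspan, span_rTensor_span σ hσ, ← Set.range_comp,
    finrank_span_eq_card (linearIndependent_rTensor σ hσ hv)]
  exact Fintype.card_fin n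

private lemma baseChange_rTensor_comm (σ : E →ₗ[F] E) (p : U →ₗ[F] U₂) (x : E ⊗[F] U) :
    p.baseChange E (LinearMap.rTensor U σ x)
      = LinearMap.rTensor U₂ σ (p.baseChange E x) := by
  induction x using TensorProduct.induction_on with
  | zero => simp
  | tmul e u => simp
  | add x y hx hy => rw [map_add, map_add, map_add, map_add, hx, hy]

variable {V : Type*} [AddCommGroup V] [Module F V]

private lemma ker_baseChange_mkQ (W : Submodule F V) :
    LinearMap.ker ((W.mkQ).baseChange E)
      = Submodule.span E ((fun v => (1 : E) ⊗ₜ[F] v) '' (W : Set V)) := by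
  refine le_antisymm ?_ (Submodule.span_le.2 ?_)
  · have main : ∀ y : E ⊗[F] W, LinearMap.lTensor E W.subtype y ∈
        Submodule.span E ((fun v => (1 : E) ⊗ₜ[F] v) '' (W : Set V)) := by
      intro y
      induction y using TensorProduct.induction_on with
      | zero => simp
      | tmul e w =>
          rw [LinearMap.lTensor_tmul]
          have h1 : (e : E) ⊗ₜ[F] (W.subtype w) = e • ((1 : E) ⊗ₜ[F] (W.subtype w)) := by
            rw [smul_tmul', smul_eq_mul, mul_one]
          rw [h1]
          exact Submodule.smul_mem _ _ (Submodule.subset_span ⟨(w : V), w.2, rfl⟩)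
      | add x y hx hy => rw [map_add]; exact Submodule.add_mem _ hx hy
    intro x hx
    have hx' : LinearMap.lTensor E W.mkQ x = 0 := by
      rw [← LinearMap.baseChange_eq_ltensor]
      exact hx
    have hx2 : x ∈ LinearMap.range (LinearMap.lTensor E W.subtype) := by
      rw [← lTensor_mkQ]
      exact hx'
    obtain ⟨y, rfl⟩ := hx2
    exact main y
  · rintro _ ⟨w, hw, rfl⟩
    rw [SetLike.mem_coe, LinearMap.mem_ker, LinearMap.baseChange_tmul,
      Submodule.mkQ_apply, (Submodule.Quotient.mk_eq_zero W).2 hw, tmul_zero]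

private lemma finrank_inf_ker_add_map {A B : Type*} [AddCommGroup A] [Module E A]
    [AddCommGroup B] [Module E B] [FiniteDimensional E A]
    (π : A →ₗ[E] B) (M : Submodule E A) :
    finrank E (M ⊓ LinearMap.ker π : Submodule E A) + finrank E (Submodule.map π M)
      = finrank E M := by
  have h := LinearMap.finrank_range_add_finrank_ker (π.domRestrict M)
  rw [LinearMap.range_domRestrict, LinearMap.ker_domRestrict] at h
  have hc : Submodule.comap M.subtype (LinearMap.ker π)
      = Submodule.comap M.subtype (M ⊓ LinearMap.ker π) := by
    ext x
    simp only [Submodule.mem_comap, Submodule.mem_inf]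
    exact ⟨fun h => ⟨x.2, h⟩, fun h => h.2⟩
  rw [hc, (Submodule.comapSubtypeEquivOfLe
    (inf_le_left : M ⊓ LinearMap.ker π ≤ M)).finrank_eq] at h
  omega

end Aux

/-- For a toy shtuka `L ⊆ V ⊗ E` and an `𝔽_q`-subspace `W ⊆ V`, either
`L ∩ (W ⊗ E)` or the image of `L` in `(V/W) ⊗ E` is Frobenius-stable. -/
theorem toy_shtuka_dichotomy
    {F E : Type*} [Field F] [Fintype F] [Field E] [Algebra F E]
    {V : Type*} [AddCommGroup V] [Module F V] [FiniteDimensional F V]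
    (σ : E →ₗ[F] E) (hσ : ∀ x : E, σ x = x ^ Fintype.card F)
    (L : Submodule E (E ⊗[F] V))
    (hL : finrank E ↥L -
        finrank E ↥(L ⊓ Submodule.span E
          (⇑(LinearMap.rTensor V σ) '' (L : Set (E ⊗[F] V)))) ≤ 1)
    (W : Submodule F V) :
    Submodule.span E (⇑(LinearMap.rTensor V σ) ''
        ((L ⊓ Submodule.span E ((fun v => (1 : E) ⊗ₜ[F] v) '' (W : Set V))) :
          Set (E ⊗[F] V)))
      = L ⊓ Submodule.span E ((fun v => (1 : E) ⊗ₜ[F] v) '' (W : Set V)) ∨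
    Submodule.span E (⇑(LinearMap.rTensor (V ⧸ W) σ) ''
        ((Submodule.map ((W.mkQ).baseChange E) L) : Set (E ⊗[F] (V ⧸ W))))
      = Submodule.map ((W.mkQ).baseChange E) L := by
  classical
  set T := LinearMap.rTensor V σ with hT
  set T' := LinearMap.rTensor (V ⧸ W) σ with hT'
  set WE := Submodule.span E ((fun v => (1 : E) ⊗ₜ[F] v) '' (W : Set V)) with hWE
  set π := (W.mkQ).baseChange E with hπ
  set L' := L ⊓ WE with hL'
  set L'' := Submodule.map π L with hL''
  set StL := Submodule.span E (⇑T '' (L : Set (E ⊗[F] V))) with hStL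
  set StL' := Submodule.span E (⇑T '' (L' : Set (E ⊗[F] V))) with hStL'
  set StL'' := Submodule.span E (⇑T' '' (L'' : Set (E ⊗[F] (V ⧸ W)))) with hStL''
  have hkerπ : LinearMap.ker π = WE := ker_baseChange_mkQ W
  have hcomm : ∀ x, π (T x) = T' (π x) := fun x => baseChange_rTensor_comm σ W.mkQ x
  have fL : finrank E StL = finrank E L := finrank_span_rTensor σ hσ L
  have fL' : finrank E StL' = finrank E L' := finrank_span_rTensor σ hσ L'
  have fL'' : finrank E StL'' = finrank E L'' := finrank_span_rTensor σ hσ L''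
  have hTWE : ∀ x ∈ WE, T x ∈ WE := by
    intro x hx
    induction hx using Submodule.span_induction with
    | mem y hy =>
        obtain ⟨w, hw, rfl⟩ := hy
        rw [hT, LinearMap.rTensor_tmul, hσ, one_pow]
        exact Submodule.subset_span ⟨w, hw, rfl⟩
    | zero => simp
    | add a b _ _ ha hb => rw [map_add]; exact Submodule.add_mem _ ha hb
    | smul c a _ ha =>
        rw [rTensor_frob_smul σ hσ]
        exact Submodule.smul_mem _ _ ha
  have hStL'le : StL' ≤ StL ⊓ WE := by
    rw [hStL']
    refine Submodule.span_le.2 ?_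
    rintro _ ⟨x, hx, rfl⟩
    have hx' : x ∈ L ⊓ WE := hx
    exact Submodule.mem_inf.2
      ⟨Submodule.subset_span ⟨x, hx'.1, rfl⟩, hTWE x hx'.2⟩
  have hmapStL : Submodule.map π StL = StL'' := by
    rw [hStL, Submodule.map_span, hStL'', hL'', Submodule.map_coe,
      ← Set.image_comp, ← Set.image_comp]
    exact congrArg (Submodule.span E) (Set.image_congr' hcomm)
  have eq2 : finrank E L' + finrank E L'' = finrank E L := by
    have h := finrank_inf_ker_add_map π L
    rwa [hkerπ, ← hL', ← hL''] at h
  have eq1 : finrank E (StL ⊓ WE : Submodule E (E ⊗[F] V)) + finrank E StL''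
      = finrank E L := by
    have h := finrank_inf_ker_add_map π StL
    rwa [hkerπ, hmapStL, fL] at h
  have hStL'eq : StL' = StL ⊓ WE := by
    refine Submodule.eq_of_le_of_finrank_le hStL'le ?_
    have hh : finrank E (StL ⊓ WE : Submodule E (E ⊗[F] V)) = finrank E L' := by omega
    rw [fL', hh]
  have star : finrank E (L ⊓ StL : Submodule E (E ⊗[F] V)) ≤
      finrank E (L' ⊓ StL' : Submodule E (E ⊗[F] V))
        + finrank E (L'' ⊓ StL'' : Submodule E (E ⊗[F] (V ⧸ W))) := by
    have h0 := finrank_inf_ker_add_map π (L ⊓ StL)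
    rw [hkerπ] at h0
    have h1 : (L ⊓ StL) ⊓ WE ≤ L' ⊓ StL' := by
      rw [hStL'eq, hL']
      intro x hx
      exact ⟨⟨hx.1.1, hx.2⟩, hx.1.2, hx.2⟩
    have h2 : Submodule.map π (L ⊓ StL) ≤ L'' ⊓ StL'' := by
      rw [hL'', ← hmapStL]
      exact le_inf (Submodule.map_mono inf_le_left) (Submodule.map_mono inf_le_right)
    calc finrank E (L ⊓ StL : Submodule E (E ⊗[F] V))
        = finrank E ((L ⊓ StL) ⊓ WE : Submodule E (E ⊗[F] V))
            + finrank E (Submodule.map π (L ⊓ StL)) := h0.symm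
      _ ≤ _ := add_le_add (Submodule.finrank_mono h1) (Submodule.finrank_mono h2)
  have b1 : finrank E (L' ⊓ StL' : Submodule E (E ⊗[F] V)) ≤ finrank E L' :=
    Submodule.finrank_mono inf_le_left
  have b2 : finrank E (L'' ⊓ StL'' : Submodule E (E ⊗[F] (V ⧸ W))) ≤ finrank E L'' :=
    Submodule.finrank_mono inf_le_left
  have hdisj : finrank E L' ≤ finrank E (L' ⊓ StL' : Submodule E (E ⊗[F] V)) ∨
      finrank E L'' ≤ finrank E (L'' ⊓ StL'' : Submodule E (E ⊗[F] (V ⧸ W))) := by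
    omega
  rcases hdisj with hc | hc
  · left
    have e1 : L' ⊓ StL' = L' := Submodule.eq_of_le_of_finrank_le inf_le_left hc
    have e2 : L' ≤ StL' := by rw [← e1]; exact inf_le_right
    exact (Submodule.eq_of_le_of_finrank_le e2 (le_of_eq fL')).symm
  · right
    have e1 : L'' ⊓ StL'' = L'' := Submodule.eq_of_le_of_finrank_le inf_le_left hc
    have e2 : L'' ≤ StL'' := by rw [← e1]; exact inf_le_right
    exact (Submodule.eq_of_le_of_finrank_le e2 (le_of_eq fL'')).symm
end

section
/- Let V be an 𝔽_q-vector space of finite dimension N ≥ 3 and let 1 ≤ n ≤ N−1. Let P_{V*} denote the set of codimension-1 subspaces (hyperplanes) of V and P_V the set of 1-dimensional subspaces (lines) of V. For functions λ : P_{V*} → ℚ and μ : P_V → ℚ, the following conditions are equivalent: (i) ∑_{J ∈ P_V} μ(J) = 0 and λ(H) = q^{n−(N−1)} · ∑_{J ∈ P_V, J ⊆ H} μ(J) for every H ∈ P_{V*}; (ii) ∑_{H ∈ P_{V*}} λ(H) = 0 and μ(J) = q^{1−n} · ∑_{H ∈ P_{V*}, H ⊇ J} λ(H) for every J ∈ P_V.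 -/
open Module

set_option linter.unusedSectionVars false
section helpers
variable {F : Type*} [Field F] [Fintype F]

variable {F : Type*} [Field F] [Fintype F]

lemma line_count {U : Type*} [AddCommGroup U] [Module F U] [FiniteDimensional F U]
    (W : Submodule F U) :
    {J : Submodule F U | finrank F ↥J = 1 ∧ J ≤ W}.ncard * (Fintype.card F - 1)
      = Fintype.card F ^ finrank F ↥W - 1 := by
  classical
  have hUfin : Finite U := Module.finite_of_finite F
  haveI : Fintype U := Fintype.ofFinite U
  haveI : Finite (Submodule F U) :=
    Finite.of_injective (fun p => (p : Set U)) SetLike.coe_injective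
  haveI : Fintype (Submodule F U) := Fintype.ofFinite _
  set q := Fintype.card F with hq
  set T : Set (Submodule F U) := {J : Submodule F U | finrank F ↥J = 1 ∧ J ≤ W} with hT
  have hTfin : T.Finite := Set.toFinite T
  set t : Finset (Submodule F U) := hTfin.toFinset with ht
  set s : Finset U := (Set.toFinset (W : Set U)).erase 0 with hs
  -- card of s
  have hWcard : Fintype.card ↥W = q ^ finrank F ↥W := card_eq_pow_finrank
  have hscard : s.card = q ^ finrank F ↥W - 1 := by
    rw [hs, Finset.card_erase_of_mem (by simp [W.zero_mem]), Set.toFinset_card]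
    rw [← hWcard]; rfl
  -- fiberwise counting
  have hmaps : ∀ v ∈ s, Submodule.span F {v} ∈ t := by
    intro v hv
    rw [hs, Finset.mem_erase, Set.mem_toFinset] at hv
    rw [ht, Set.Finite.mem_toFinset, hT]
    exact ⟨finrank_span_singleton hv.1, Submodule.span_le.2 (by simpa using hv.2)⟩
  have hfib : ∀ J ∈ t, (s.filter (fun v => Submodule.span F {v} = J)).card = q - 1 := by
    intro J hJ
    rw [ht, Set.Finite.mem_toFinset, hT] at hJ
    have hfe : s.filter (fun v => Submodule.span F {v} = J)
        = (Set.toFinset (J : Set U)).erase 0 := by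
      ext v
      simp only [Finset.mem_filter, hs, Finset.mem_erase, Set.mem_toFinset, SetLike.mem_coe]
      constructor
      · rintro ⟨⟨hv0, -⟩, hsp⟩
        exact ⟨hv0, hsp ▸ Submodule.mem_span_singleton_self v⟩
      · rintro ⟨hv0, hvJ⟩
        have hle : Submodule.span F {v} ≤ J := Submodule.span_le.2 (by simpa using hvJ)
        have heq : Submodule.span F {v} = J :=
          Submodule.eq_of_le_of_finrank_eq hle (by rw [finrank_span_singleton hv0, hJ.1])
        exact ⟨⟨hv0, hJ.2 hvJ⟩, heq⟩
    rw [hfe, Finset.card_erase_of_mem (by simp [J.zero_mem]), Set.toFinset_card]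
    have : Fintype.card ↥J = q ^ finrank F ↥J := card_eq_pow_finrank
    rw [show Fintype.card (J : Set U) = Fintype.card ↥J from rfl, this, hJ.1, pow_one]
  have := Finset.card_eq_sum_card_fiberwise hmaps
  rw [hscard, Finset.sum_congr rfl hfib, Finset.sum_const, smul_eq_mul] at this
  rw [this, Set.ncard_eq_toFinset_card _ hTfin]
lemma ann_finrank {U : Type*} [AddCommGroup U] [Module F U] [FiniteDimensional F U]
    (W : Submodule F U) :
    finrank F ↥W.dualAnnihilator = finrank F U - finrank F ↥W := by
  have h1 : finrank F ↥W.dualAnnihilator = finrank F (U ⧸ W) :=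
    (Subspace.quotEquivAnnihilator W).symm.finrank_eq
  have h2 := Submodule.finrank_quotient_add_finrank W
  have h3 := Submodule.finrank_le W
  omega

lemma hyp_count {U : Type*} [AddCommGroup U] [Module F U] [FiniteDimensional F U]
    (W : Submodule F U) (hU : 1 ≤ finrank F U) :
    {H : Submodule F U | finrank F ↥H = finrank F U - 1 ∧ W ≤ H}.ncard * (Fintype.card F - 1)
      = Fintype.card F ^ (finrank F U - finrank F ↥W) - 1 := by
  classical
  set N := finrank F U with hN
  have hN1 : 1 ≤ N := hU
  have key : ∀ H : Submodule F U,
      finrank F ↥H + finrank F ↥H.dualAnnihilator = N := by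
    intro H
    have h1 := ann_finrank (F := F) H
    have h2 := Submodule.finrank_le H
    omega
  let e : {H : Submodule F U // finrank F ↥H = N - 1 ∧ W ≤ H} ≃
      {L : Submodule F (Dual F U) // finrank F ↥L = 1 ∧ L ≤ W.dualAnnihilator} :=
    { toFun := fun H => ⟨H.1.dualAnnihilator, by
        refine ⟨?_, Submodule.dualAnnihilator_anti H.2.2⟩
        have h1 := key H.1
        have h2 := H.2.1
        omega⟩
      invFun := fun L => ⟨L.1.dualCoannihilator, by
        constructor
        · have h := key L.1.dualCoannihilator
          have h2 : (L.1.dualCoannihilator).dualAnnihilator = L.1 :=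
            Subspace.dualCoannihilator_dualAnnihilator_eq
          rw [h2] at h
          have h3 := L.2.1
          omega
        · conv_lhs => rw [← Subspace.dualAnnihilator_dualCoannihilator_eq (W := W)]
          exact Submodule.dualCoannihilator_anti L.2.2⟩
      left_inv := fun H => Subtype.ext Subspace.dualAnnihilator_dualCoannihilator_eq
      right_inv := fun L => Subtype.ext Subspace.dualCoannihilator_dualAnnihilator_eq }
  have hcard : {H : Submodule F U | finrank F ↥H = N - 1 ∧ W ≤ H}.ncard
      = {L : Submodule F (Dual F U) | finrank F ↥L = 1 ∧ L ≤ W.dualAnnihilator}.ncard := by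
    rw [← Nat.card_coe_set_eq, ← Nat.card_coe_set_eq]
    exact Nat.card_congr e
  rw [hcard, line_count W.dualAnnihilator, ann_finrank]
lemma cast_card_eq {m k : ℕ} (h : m * (Fintype.card F - 1) = Fintype.card F ^ k - 1) :
    (m : ℚ) = ((Fintype.card F : ℚ) ^ k - 1) / ((Fintype.card F : ℚ) - 1) := by
  have hq2 : 2 ≤ Fintype.card F := Fintype.one_lt_card
  have h1 : (1:ℕ) ≤ Fintype.card F := by omega
  have h2 : (1:ℕ) ≤ Fintype.card F ^ k := Nat.one_le_pow _ _ (by omega)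
  have hc : (m : ℚ) * ((Fintype.card F : ℚ) - 1) = (Fintype.card F : ℚ) ^ k - 1 := by
    have := congrArg (fun x : ℕ => (x : ℚ)) h
    push_cast [Nat.cast_sub h1, Nat.cast_sub h2] at this ⊢
    convert this using 2 <;> push_cast <;> ring
  have hne : ((Fintype.card F : ℚ) - 1) ≠ 0 := by
    have : (2:ℚ) ≤ (Fintype.card F : ℚ) := by exact_mod_cast hq2
    linarith
  field_simp [hne] at hc ⊢
  linarith [hc]

lemma sup_lines_finrank {U : Type*} [AddCommGroup U] [Module F U] [FiniteDimensional F U]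
    {J J' : Submodule F U} (hJ : finrank F ↥J = 1) (hJ' : finrank F ↥J' = 1)
    (hne : J ≠ J') : finrank F ↥(J ⊔ J') = 2 := by
  have hsum := Submodule.finrank_sup_add_finrank_inf_eq J J'
  have hle : finrank F ↥(J ⊓ J') ≤ 1 := hJ ▸ Submodule.finrank_mono inf_le_left
  have hinf : finrank F ↥(J ⊓ J') = 0 := by
    by_contra h
    have h1 : finrank F ↥(J ⊓ J') = 1 := by omega
    have he : J ⊓ J' = J :=
      Submodule.eq_of_le_of_finrank_eq inf_le_left (h1.trans hJ.symm)
    have hJJ' : J ≤ J' := he ▸ inf_le_right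
    exact hne (Submodule.eq_of_le_of_finrank_eq hJJ' (hJ.trans hJ'.symm))
  omega

lemma inf_hyps_finrank {U : Type*} [AddCommGroup U] [Module F U] [FiniteDimensional F U]
    {H H' : Submodule F U} {N : ℕ} (hU : finrank F U = N) (hN : 2 ≤ N)
    (hH : finrank F ↥H = N - 1) (hH' : finrank F ↥H' = N - 1)
    (hne : H ≠ H') : finrank F ↥(H ⊓ H') = N - 2 := by
  have hsum := Submodule.finrank_sup_add_finrank_inf_eq H H'
  have hle : finrank F ↥(H ⊔ H') ≤ N := hU ▸ Submodule.finrank_le _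
  have hge : N - 1 ≤ finrank F ↥(H ⊔ H') := hH ▸ Submodule.finrank_mono le_sup_left
  have hsup : finrank F ↥(H ⊔ H') = N := by
    by_contra h
    have h1 : finrank F ↥(H ⊔ H') = N - 1 := by omega
    have he : H = H ⊔ H' :=
      Submodule.eq_of_le_of_finrank_eq le_sup_left (hH.trans h1.symm)
    have he' : H' = H ⊔ H' :=
      Submodule.eq_of_le_of_finrank_eq le_sup_right (hH'.trans h1.symm)
    exact hne (he.trans he'.symm)
  omega

lemma double_count {α β : Type*} [DecidableEq α] [DecidableEq β]
    (A : Finset α) (B : Finset β) (r : α → β → Prop) [∀ a b, Decidable (r a b)]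
    (g : β → ℚ) :
    ∑ a ∈ A, ∑ b ∈ B.filter (fun b => r a b), g b
      = ∑ b ∈ B, g b * ((A.filter (fun a => r a b)).card : ℚ) := by
  have h1 : ∀ a ∈ A, ∑ b ∈ B.filter (fun b => r a b), g b
      = ∑ b ∈ B, if r a b then g b else 0 := fun a _ => (Finset.sum_filter _ _)
  rw [Finset.sum_congr rfl h1, Finset.sum_comm]
  refine Finset.sum_congr rfl fun b _ => ?_
  rw [← Finset.sum_filter, Finset.sum_const, nsmul_eq_mul, mul_comm]
lemma total_calc {γ : Type*} [DecidableEq γ] (L Hs : Finset γ) (r : γ → γ → Prop)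
    [∀ a b, Decidable (r a b)] (mu : γ → ℚ) (aQ : ℚ)
    (hA : ∀ J ∈ L, ((Hs.filter (fun H => r J H)).card : ℚ) = aQ)
    (hsum : ∑ J ∈ L, mu J = 0) :
    ∑ H ∈ Hs, ∑ J ∈ L.filter (fun J => r J H), mu J = 0 := by
  rw [double_count Hs L (fun H J => r J H) mu]
  have : ∀ J ∈ L, mu J * ((Hs.filter (fun H => r J H)).card : ℚ) = mu J * aQ :=
    fun J hJ => by rw [hA J hJ]
  rw [Finset.sum_congr rfl this, ← Finset.sum_mul, hsum, zero_mul]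

lemma key_calc {γ : Type*} [DecidableEq γ] (L Hs : Finset γ) (r : γ → γ → Prop)
    [∀ a b, Decidable (r a b)] (mu : γ → ℚ) (J0 : γ) (hJ0 : J0 ∈ L) (aQ bQ : ℚ)
    (hA : ((Hs.filter (fun H => r J0 H)).card : ℚ) = aQ)
    (hB : ∀ J ∈ L, J ≠ J0 → ((Hs.filter (fun H => r J0 H ∧ r J H)).card : ℚ) = bQ)
    (hsum : ∑ J ∈ L, mu J = 0) :
    ∑ H ∈ Hs.filter (fun H => r J0 H), ∑ J ∈ L.filter (fun J => r J H), mu J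
      = mu J0 * (aQ - bQ) := by
  rw [double_count (Hs.filter (fun H => r J0 H)) L (fun H J => r J H) mu]
  have hff : ∀ J : γ, (Hs.filter (fun H => r J0 H)).filter (fun H => r J H)
      = Hs.filter (fun H => r J0 H ∧ r J H) := fun J => by
    rw [Finset.filter_filter]
  have hsplit := Finset.sum_eq_sum_sdiff_singleton_add hJ0
      (fun J => mu J * (((Hs.filter (fun H => r J0 H)).filter (fun H => r J H)).card : ℚ))
  rw [hsplit]
  have hJ0term : ((Hs.filter (fun H => r J0 H)).filter (fun H => r J0 H)).card
      = (Hs.filter (fun H => r J0 H)).card := by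
    rw [Finset.filter_filter]
    congr 1
    ext H; simp [and_self]
  have hsum' : ∑ J ∈ L \ {J0}, mu J = - mu J0 := by
    have := Finset.sum_eq_sum_sdiff_singleton_add hJ0 mu
    rw [hsum] at this
    linarith
  have hrest : ∀ J ∈ L \ {J0},
      mu J * (((Hs.filter (fun H => r J0 H)).filter (fun H => r J H)).card : ℚ)
        = mu J * bQ := by
    intro J hJ
    rw [Finset.mem_sdiff, Finset.mem_singleton] at hJ
    rw [hff J, hB J hJ.1 hJ.2]
  rw [Finset.sum_congr rfl hrest, ← Finset.sum_mul, hsum', hJ0term, hA]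
  ring
end helpers

/-- Inversion for the finite Radon transform between lines and hyperplanes of a
finite-dimensional vector space over `𝔽_q`. -/
theorem radon_transform_inversion
    {F : Type*} [Field F] [Fintype F]
    {V : Type*} [AddCommGroup V] [Module F V] [FiniteDimensional F V]
    (N n : ℕ) (hNV : finrank F V = N) (hN : 3 ≤ N) (hn1 : 1 ≤ n) (hnN : n ≤ N - 1)
    (lam mu : Submodule F V → ℚ) :
    ((∑ᶠ J ∈ {J : Submodule F V | finrank F ↥J = 1}, mu J) = 0 ∧
      ∀ H : Submodule F V, finrank F ↥H = N - 1 →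
        lam H = (Fintype.card F : ℚ) ^ ((n : ℤ) - ((N : ℤ) - 1)) *
          ∑ᶠ J ∈ {J : Submodule F V | finrank F ↥J = 1 ∧ J ≤ H}, mu J)
    ↔
    ((∑ᶠ H ∈ {H : Submodule F V | finrank F ↥H = N - 1}, lam H) = 0 ∧
      ∀ J : Submodule F V, finrank F ↥J = 1 →
        mu J = (Fintype.card F : ℚ) ^ ((1 : ℤ) - (n : ℤ)) *
          ∑ᶠ H ∈ {H : Submodule F V | finrank F ↥H = N - 1 ∧ J ≤ H}, lam H) := by
  classical
  haveI : Finite V := Module.finite_of_finite F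
  haveI : Finite (Submodule F V) :=
    Finite.of_injective (fun p => (p : Set V)) SetLike.coe_injective
  have hq2 : 2 ≤ Fintype.card F := Fintype.one_lt_card
  set q : ℚ := (Fintype.card F : ℚ) with hqdef
  have hq2' : (2:ℚ) ≤ q := by rw [hqdef]; exact_mod_cast hq2
  have hq0 : q ≠ 0 := by linarith
  have hq1 : q - 1 ≠ 0 := by linarith
  set aQ : ℚ := (q ^ (N-1) - 1) / (q - 1) with haQ
  set bQ : ℚ := (q ^ (N-2) - 1) / (q - 1) with hbQ
  have hab : aQ - bQ = q ^ (N-2) := by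
    rw [haQ, hbQ, div_sub_div_same, div_eq_iff hq1,
      show N - 1 = (N-2) + 1 by omega, pow_succ]
    ring
  set L : Finset (Submodule F V) := (Set.toFinite {J : Submodule F V | finrank F ↥J = 1}).toFinset
    with hL
  set Hs : Finset (Submodule F V) :=
    (Set.toFinite {H : Submodule F V | finrank F ↥H = N - 1}).toFinset with hHs
  have hmemL : ∀ J, J ∈ L ↔ finrank F ↥J = 1 := fun J => by
    rw [hL, Set.Finite.mem_toFinset]; exact Iff.rfl
  have hmemHs : ∀ H, H ∈ Hs ↔ finrank F ↥H = N - 1 := fun H => by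
    rw [hHs, Set.Finite.mem_toFinset]; exact Iff.rfl
  -- finsum conversions
  have eL : (∑ᶠ J ∈ {J : Submodule F V | finrank F ↥J = 1}, mu J) = ∑ J ∈ L, mu J :=
    finsum_mem_eq_finite_toFinset_sum _ _
  have eH : (∑ᶠ H ∈ {H : Submodule F V | finrank F ↥H = N - 1}, lam H) = ∑ H ∈ Hs, lam H :=
    finsum_mem_eq_finite_toFinset_sum _ _
  have eLH : ∀ Hp : Submodule F V,
      (∑ᶠ J ∈ {J : Submodule F V | finrank F ↥J = 1 ∧ J ≤ Hp}, mu J)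
        = ∑ J ∈ L.filter (fun J => J ≤ Hp), mu J := by
    intro Hp
    rw [finsum_mem_eq_finite_toFinset_sum _ (Set.toFinite _)]
    apply Finset.sum_congr _ (fun _ _ => rfl)
    ext J
    simp only [Set.Finite.mem_toFinset, Set.mem_setOf_eq, Finset.mem_filter, hmemL]
  have eHJ : ∀ Jp : Submodule F V,
      (∑ᶠ H ∈ {H : Submodule F V | finrank F ↥H = N - 1 ∧ Jp ≤ H}, lam H)
        = ∑ H ∈ Hs.filter (fun H => Jp ≤ H), lam H := by
    intro Jp
    rw [finsum_mem_eq_finite_toFinset_sum _ (Set.toFinite _)]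
    apply Finset.sum_congr _ (fun _ _ => rfl)
    ext H
    simp only [Set.Finite.mem_toFinset, Set.mem_setOf_eq, Finset.mem_filter, hmemHs]
  -- cardinality facts
  have cardA : ∀ J ∈ L, ((Hs.filter (fun H => J ≤ H)).card : ℚ) = aQ := by
    intro J hJ
    have hJ1 : finrank F ↥J = 1 := (hmemL J).1 hJ
    have h := hyp_count (F := F) J (show 1 ≤ finrank F V by rw [hNV]; omega)
    rw [hNV, hJ1] at h
    have hc : (Hs.filter (fun H => J ≤ H)).card
        = {H : Submodule F V | finrank F ↥H = N - 1 ∧ J ≤ H}.ncard := by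
      rw [← Set.ncard_coe_finset]
      congr 1
      ext H
      simp only [Finset.coe_filter, Set.mem_setOf_eq, hmemHs]
    rw [hc, haQ, cast_card_eq h]
  have cardB : ∀ J0 ∈ L, ∀ J ∈ L, J ≠ J0 →
      ((Hs.filter (fun H => J0 ≤ H ∧ J ≤ H)).card : ℚ) = bQ := by
    intro J0 hJ0 J hJ hne
    have hJ01 : finrank F ↥J0 = 1 := (hmemL J0).1 hJ0
    have hJ1 : finrank F ↥J = 1 := (hmemL J).1 hJ
    have hsup : finrank F ↥(J0 ⊔ J) = 2 := sup_lines_finrank hJ01 hJ1 (Ne.symm hne)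
    have h := hyp_count (F := F) (J0 ⊔ J) (show 1 ≤ finrank F V by rw [hNV]; omega)
    rw [hNV, hsup] at h
    have hc : (Hs.filter (fun H => J0 ≤ H ∧ J ≤ H)).card
        = {H : Submodule F V | finrank F ↥H = N - 1 ∧ J0 ⊔ J ≤ H}.ncard := by
      rw [← Set.ncard_coe_finset]
      congr 1
      ext H
      simp only [Finset.coe_filter, Set.mem_setOf_eq, hmemHs, sup_le_iff]
    rw [hc, hbQ, cast_card_eq h]
  have cardA' : ∀ H ∈ Hs, ((L.filter (fun J => J ≤ H)).card : ℚ) = aQ := by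
    intro H hH
    have hH1 : finrank F ↥H = N - 1 := (hmemHs H).1 hH
    have h := line_count (F := F) H
    rw [hH1] at h
    have hc : (L.filter (fun J => J ≤ H)).card
        = {J : Submodule F V | finrank F ↥J = 1 ∧ J ≤ H}.ncard := by
      rw [← Set.ncard_coe_finset]
      congr 1
      ext J
      simp only [Finset.coe_filter, Set.mem_setOf_eq, hmemL]
    rw [hc, haQ, cast_card_eq h]
  have cardB' : ∀ H0 ∈ Hs, ∀ H ∈ Hs, H ≠ H0 →
      ((L.filter (fun J => J ≤ H0 ∧ J ≤ H)).card : ℚ) = bQ := by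
    intro H0 hH0 H hH hne
    have hH01 : finrank F ↥H0 = N - 1 := (hmemHs H0).1 hH0
    have hH1 : finrank F ↥H = N - 1 := (hmemHs H).1 hH
    have hinf : finrank F ↥(H0 ⊓ H) = N - 2 :=
      inf_hyps_finrank hNV (by omega) hH01 hH1 (Ne.symm hne)
    have h := line_count (F := F) (H0 ⊓ H)
    rw [hinf] at h
    have hc : (L.filter (fun J => J ≤ H0 ∧ J ≤ H)).card
        = {J : Submodule F V | finrank F ↥J = 1 ∧ J ≤ H0 ⊓ H}.ncard := by
      rw [← Set.ncard_coe_finset]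
      congr 1
      ext J
      simp only [Finset.coe_filter, Set.mem_setOf_eq, hmemL, le_inf_iff]
    rw [hc, hbQ, cast_card_eq h]
  -- zpow identity
  have hz : q ^ ((1:ℤ) - (n:ℤ)) * (q ^ ((n:ℤ) - ((N:ℤ) - 1)) * q ^ (N-2 : ℕ)) = 1 := by
    rw [← zpow_natCast q (N-2), ← zpow_add₀ hq0, ← zpow_add₀ hq0]
    rw [show ((1:ℤ) - (n:ℤ)) + (((n:ℤ) - ((N:ℤ) - 1)) + ((N-2 : ℕ) : ℤ)) = 0 by
      push_cast [Nat.cast_sub (show 2 ≤ N by omega)]; ring]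
    exact zpow_zero q
  constructor
  · rintro ⟨h1, h2⟩
    rw [eL] at h1
    have h2' : ∀ H ∈ Hs, lam H = q ^ ((n:ℤ) - ((N:ℤ) - 1)) *
        ∑ J ∈ L.filter (fun J => J ≤ H), mu J := by
      intro H hH
      rw [h2 H ((hmemHs H).1 hH), eLH]
    constructor
    · rw [eH, Finset.sum_congr rfl h2', ← Finset.mul_sum,
        total_calc L Hs (fun J H => J ≤ H) mu aQ cardA h1, mul_zero]
    · intro J0 hJ01
      have hJ0 : J0 ∈ L := (hmemL J0).2 hJ01
      rw [eHJ J0]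
      have hcongr : ∀ H ∈ Hs.filter (fun H => J0 ≤ H), lam H
          = q ^ ((n:ℤ) - ((N:ℤ) - 1)) * ∑ J ∈ L.filter (fun J => J ≤ H), mu J := by
        intro H hH
        exact h2' H (Finset.mem_of_mem_filter H hH)
      rw [Finset.sum_congr rfl hcongr, ← Finset.mul_sum,
        key_calc L Hs (fun J H => J ≤ H) mu J0 hJ0 aQ bQ (cardA J0 hJ0)
          (fun J hJ hne => cardB J0 hJ0 J hJ hne) h1, hab]
      rw [show q ^ ((1:ℤ) - (n:ℤ)) * (q ^ ((n:ℤ) - ((N:ℤ) - 1)) * (mu J0 * q ^ (N-2:ℕ))) =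
        q ^ ((1:ℤ) - (n:ℤ)) * (q ^ ((n:ℤ) - ((N:ℤ) - 1)) * q ^ (N-2:ℕ)) * mu J0 by ring, hz,
        one_mul]
  · rintro ⟨h1, h2⟩
    rw [eH] at h1
    have h2' : ∀ J ∈ L, mu J = q ^ ((1:ℤ) - (n:ℤ)) *
        ∑ H ∈ Hs.filter (fun H => J ≤ H), lam H := by
      intro J hJ
      rw [h2 J ((hmemL J).1 hJ), eHJ]
    constructor
    · rw [eL, Finset.sum_congr rfl h2', ← Finset.mul_sum,
        total_calc Hs L (fun H J => J ≤ H) lam aQ cardA' h1, mul_zero]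
    · intro H0 hH01
      have hH0 : H0 ∈ Hs := (hmemHs H0).2 hH01
      rw [eLH H0]
      have hcongr : ∀ J ∈ L.filter (fun J => J ≤ H0), mu J
          = q ^ ((1:ℤ) - (n:ℤ)) * ∑ H ∈ Hs.filter (fun H => J ≤ H), lam H := by
        intro J hJ
        exact h2' J (Finset.mem_of_mem_filter J hJ)
      rw [Finset.sum_congr rfl hcongr, ← Finset.mul_sum,
        key_calc Hs L (fun H J => J ≤ H) lam H0 hH0 aQ bQ (cardA' H0 hH0)
          (fun H hH hne => cardB' H0 hH0 H hH hne) h1, hab]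
      rw [show q ^ ((n:ℤ) - ((N:ℤ) - 1)) * (q ^ ((1:ℤ) - (n:ℤ)) * (lam H0 * q ^ (N-2:ℕ))) =
        q ^ ((1:ℤ) - (n:ℤ)) * (q ^ ((n:ℤ) - ((N:ℤ) - 1)) * q ^ (N-2:ℕ)) * lam H0 by ring, hz]
      rw [one_mul]
end

section
/- Let E be a field containing 𝔽_q, σ : E → E the q-power Frobenius, V a finite-dimensional 𝔽_q-vector space, and τ = id_V ⊗ σ the σ-semilinear endomorphism of V ⊗_{𝔽_q} E. If L ⊆ V ⊗ E is an E-subspace with τ*L = L (where τ*L is the E-span of τ(L)), then L = M ⊗_{𝔽_q} E for a unique 𝔽_q-subspace M ⊆ V, namely M = L ∩ (V ⊗ 1). -/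
open TensorProduct Module

section Aux

variable {F E : Type*} [Field F] [Field E] [Algebra F E]

private lemma sumExtend_inl {V : Type*} [AddCommGroup V] [Module F V] {ι : Type*}
    (w : ι → V) (hw : LinearIndependent F w) (i : ι) :
    Basis.sumExtend hw (Sum.inl i) = w i := by
  rw [Basis.sumExtend, Basis.reindex_apply, Basis.extend_apply_self]
  rfl

private lemma li_one_tmul {V : Type*} [AddCommGroup V] [Module F V] {ι : Type*}
    (w : ι → V) (hw : LinearIndependent F w) :
    LinearIndependent E (fun i => (1 : E) ⊗ₜ[F] w i) := by
  have h := ((Basis.sumExtend hw).baseChange E).linearIndependent.comp Sum.inl Sum.inl_injective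
  have heq : (fun i => (1 : E) ⊗ₜ[F] w i)
      = fun i => ((Basis.sumExtend hw).baseChange E) (Sum.inl i) := by
    funext i
    rw [Basis.baseChange_apply, sumExtend_inl]
  rw [heq]; exact h

private lemma frob_fixed_mem_range [Fintype F] (x : E)
    (hx : x ^ Fintype.card F = x) : ∃ c : F, algebraMap F E c = x := by
  by_contra h
  push_neg at h
  set q := Fintype.card F with hq
  have hq1 : 1 < q := Fintype.one_lt_card
  set p : Polynomial E := Polynomial.X ^ q - Polynomial.X with hp
  have hpne : p ≠ 0 := by
    rw [hp]
    intro hzero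
    rw [sub_eq_zero] at hzero
    have := congrArg Polynomial.natDegree hzero
    rw [Polynomial.natDegree_X_pow, Polynomial.natDegree_X] at this
    omega
  have hroot : ∀ y : E, y ^ q = y → y ∈ p.roots := by
    intro y hy
    rw [Polynomial.mem_roots hpne]
    simp [hp, Polynomial.IsRoot, sub_eq_zero, hy]
  classical
  set Z : Finset E := (Finset.univ.image (algebraMap F E)) ∪ {x} with hZ
  have hsub : Z.val ⊆ p.roots := by
    intro a ha
    rw [← Finset.mem_def, hZ, Finset.mem_union] at ha
    rcases ha with ha | ha
    · obtain ⟨c, _, rfl⟩ := Finset.mem_image.mp ha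
      apply hroot
      rw [← map_pow, FiniteField.pow_card]
    · rw [Finset.mem_singleton] at ha
      exact ha ▸ hroot x hx
  have hdisj : Disjoint (Finset.univ.image (algebraMap F E)) ({x} : Finset E) := by
    rw [Finset.disjoint_singleton_right]
    intro hx'
    obtain ⟨c, _, hc⟩ := Finset.mem_image.mp hx'
    exact h c hc
  have hcard : Z.card = q + 1 := by
    rw [hZ, Finset.card_union_of_disjoint hdisj, Finset.card_image_of_injective _
      (algebraMap F E).injective, Finset.card_univ, Finset.card_singleton]
  have hle := Polynomial.card_le_degree_of_subset_roots hsub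
  have hdeg : p.natDegree ≤ q := by
    rw [hp]
    refine le_trans (Polynomial.natDegree_sub_le _ _) ?_
    simp [Polynomial.natDegree_X_pow, Polynomial.natDegree_X]
    omega
  omega

private lemma exists_rep {W : Type*} [AddCommGroup W] [Module F W] (x : E ⊗[F] W) :
    ∃ (n : ℕ) (e : Fin n → E) (w : Fin n → W),
      LinearIndependent F w ∧ x = ∑ i, e i ⊗ₜ[F] w i := by
  classical
  let b := Basis.ofVectorSpace F W
  let B := b.baseChange E
  set s := (B.repr x).support with hs
  refine ⟨s.card, fun i => B.repr x ((s.equivFin.symm i) : _),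
    fun i => b ((s.equivFin.symm i) : _), ?_, ?_⟩
  · exact b.linearIndependent.comp _
      (Subtype.val_injective.comp s.equivFin.symm.injective)
  · have hx : x = ∑ a ∈ s, B.repr x a • B a := by
      conv_lhs => rw [← B.linearCombination_repr x]
      rw [Finsupp.linearCombination_apply, Finsupp.sum]
    have hterm : ∀ a : ↥s, B.repr x (a : _) • B (a : _)
        = B.repr x (a : _) ⊗ₜ[F] b (a : _) := by
      intro a
      rw [show B (a : _) = (1 : E) ⊗ₜ[F] b (a : _) from Basis.baseChange_apply .., smul_tmul',
        smul_eq_mul, mul_one]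
    calc x = ∑ a ∈ s, B.repr x a • B a := hx
    _ = ∑ a : ↥s, B.repr x (a : _) • B (a : _) := (Finset.sum_coe_sort _ _).symm
    _ = ∑ a : ↥s, B.repr x (a : _) ⊗ₜ[F] b (a : _) := Finset.sum_congr rfl fun a _ => hterm a
    _ = ∑ i : Fin s.card, B.repr x ((s.equivFin.symm i) : _) ⊗ₜ[F] b ((s.equivFin.symm i) : _) :=
      (Equiv.sum_comp s.equivFin.symm _).symm

private lemma exists_one_tmul_mem [Fintype F] {W : Type*} [AddCommGroup W] [Module F W]
    (σ : E →ₗ[F] E) (hσ : ∀ x : E, σ x = x ^ Fintype.card F)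
    (L : Submodule E (E ⊗[F] W)) (hstab : ∀ x ∈ L, LinearMap.rTensor W σ x ∈ L)
    (hne : L ≠ ⊥) : ∃ w : W, w ≠ 0 ∧ (1 : E) ⊗ₜ[F] w ∈ L := by
  classical
  obtain ⟨x₀, hx₀L, hx₀⟩ := Submodule.exists_mem_ne_zero_of_ne_bot hne
  obtain ⟨n₀, e₀, w₀, hw₀, hrep₀⟩ := exists_rep x₀
  suffices h : ∀ n : ℕ, ∀ x, x ∈ L → x ≠ 0 → ∀ e : Fin n → E, ∀ w : Fin n → W,
      LinearIndependent F w → x = ∑ i, e i ⊗ₜ[F] w i →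
      ∃ w₁ : W, w₁ ≠ 0 ∧ (1 : E) ⊗ₜ[F] w₁ ∈ L by
    exact h n₀ x₀ hx₀L hx₀ e₀ w₀ hw₀ hrep₀
  intro n
  induction n using Nat.strong_induction_on with
  | _ n ih =>
  cases n with
  | zero =>
    intro x hxL hx0 e w hw hrep
    exact absurd (by simpa using hrep) hx0
  | succ m =>
  intro x hxL hx0 e w hw hrep
  by_cases hz : ∃ j, e j = 0
  · obtain ⟨j, hj⟩ := hz
    refine ih m (Nat.lt_succ_self m) x hxL hx0 (fun i => e (j.succAbove i))
      (fun i => w (j.succAbove i)) (hw.comp _ (Fin.succAbove_right_injective)) ?_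
    rw [hrep, Fin.sum_univ_succAbove (fun i => e i ⊗ₜ[F] w i) j, hj, zero_tmul, zero_add]
  · push_neg at hz
    set c : Fin (m+1) → E := fun i => (e 0)⁻¹ * e i with hc
    have hx'L : (e 0)⁻¹ • x ∈ L := L.smul_mem _ hxL
    have hx'rep : (e 0)⁻¹ • x = ∑ i, c i ⊗ₜ[F] w i := by
      rw [hrep, Finset.smul_sum]
      exact Finset.sum_congr rfl fun i _ => by rw [smul_tmul', smul_eq_mul]
    have hτ : LinearMap.rTensor W σ ((e 0)⁻¹ • x) ∈ L := hstab _ hx'L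
    have hτrep : LinearMap.rTensor W σ ((e 0)⁻¹ • x) = ∑ i, σ (c i) ⊗ₜ[F] w i := by
      rw [hx'rep, map_sum]
      exact Finset.sum_congr rfl fun i _ => LinearMap.rTensor_tmul _ _ _ _
    set y := LinearMap.rTensor W σ ((e 0)⁻¹ • x) - (e 0)⁻¹ • x with hy
    have hyL : y ∈ L := sub_mem hτ hx'L
    have hyrep : y = ∑ i, (σ (c i) - c i) ⊗ₜ[F] w i := by
      rw [hy, hτrep, hx'rep, ← Finset.sum_sub_distrib]
      exact Finset.sum_congr rfl fun i _ => (sub_tmul _ _ _).symm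
    have hc0 : c 0 = 1 := inv_mul_cancel₀ (hz 0)
    have hcoef0 : σ (c 0) - c 0 = 0 := by rw [hc0, hσ, one_pow, sub_self]
    by_cases hy0 : y = 0
    · -- all coefficients are fixed by σ
      have hfix : ∀ i, σ (c i) = c i := by
        have li := li_one_tmul (E := E) w hw
        have hsum : ∑ i, (σ (c i) - c i) • ((1 : E) ⊗ₜ[F] w i) = 0 := by
          rw [← hy0, hyrep]
          exact Finset.sum_congr rfl fun i _ => by
            rw [smul_tmul', smul_eq_mul, mul_one]
        intro i
        have := linearIndependent_iff'.mp li Finset.univ _ hsum i (Finset.mem_univ i)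
        exact sub_eq_zero.mp this
      have hcq : ∀ i, (c i) ^ Fintype.card F = c i := fun i => by
        rw [← hσ]; exact hfix i
      choose a ha using fun i => frob_fixed_mem_range (c i) (hcq i)
      refine ⟨∑ i, a i • w i, ?_, ?_⟩
      · intro h0
        have := linearIndependent_iff'.mp hw Finset.univ a h0 0 (Finset.mem_univ 0)
        apply one_ne_zero (α := F)
        rw [← this]
        apply (algebraMap F E).injective
        rw [ha 0, hc0, map_one]
      · have heq : (1 : E) ⊗ₜ[F] (∑ i, a i • w i) = (e 0)⁻¹ • x := by
          rw [tmul_sum, hx'rep]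
          refine Finset.sum_congr rfl fun i _ => ?_
          rw [← smul_tmul, ← ha i, Algebra.algebraMap_eq_smul_one]
        rw [heq]
        exact hx'L
    · exact ih m (Nat.lt_succ_self m) y hyL hy0 (fun i => σ (c i.succ) - c i.succ)
        (fun i => w i.succ)
        (hw.comp Fin.succ (Fin.succ_injective m)) (by
          rw [hyrep, Fin.sum_univ_succ, hcoef0, zero_tmul, zero_add])

private lemma one_tmul_mem_span {V : Type*} [AddCommGroup V] [Module F V]
    {s : Set V} {v : V} (h : v ∈ Submodule.span F s) :
    (1 : E) ⊗ₜ[F] v ∈ Submodule.span E ((fun u => (1 : E) ⊗ₜ[F] u) '' s) := by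
  refine Submodule.span_induction
    (p := fun u _ => (1 : E) ⊗ₜ[F] u ∈ Submodule.span E ((fun u => (1 : E) ⊗ₜ[F] u) '' s))
    (fun u hu => Submodule.subset_span ⟨u, hu, rfl⟩) (by simp) ?_ ?_ h
  · intro u₁ u₂ _ _ h₁ h₂
    rw [tmul_add]
    exact Submodule.add_mem _ h₁ h₂
  · intro r u _ hu
    rw [tmul_smul, ← algebraMap_smul E r ((1 : E) ⊗ₜ[F] u)]
    exact Submodule.smul_mem _ _ hu

private lemma mem_span_one_tmul_iff {V : Type*} [AddCommGroup V] [Module F V]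
    (M : Submodule F V) (v : V) :
    (1 : E) ⊗ₜ[F] v ∈ Submodule.span E ((fun u => (1 : E) ⊗ₜ[F] u) '' (M : Set V)) ↔ v ∈ M := by
  constructor
  · intro hv
    let c := Basis.ofVectorSpace F ↥M
    have hind : LinearIndependent F (M.subtype ∘ c) :=
      c.linearIndependent.map' M.subtype (Submodule.ker_subtype M)
    let b := Basis.sumExtend hind
    have hbinl : ∀ k, b (Sum.inl k) = (c k : V) := fun k => sumExtend_inl _ hind k
    have hM : M = Submodule.span F (b '' (Set.range Sum.inl)) := by
      have himg : b '' (Set.range Sum.inl) = M.subtype '' (Set.range c) := by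
        have hcomp : ⇑b ∘ Sum.inl = ⇑M.subtype ∘ ⇑c := funext hbinl
        rw [← Set.range_comp, hcomp, Set.range_comp]
      rw [himg, Submodule.span_image, c.span_eq, Submodule.map_subtype_top]
    have hspan : Submodule.span E ((fun u => (1 : E) ⊗ₜ[F] u) '' (M : Set V))
        = Submodule.span E ((b.baseChange E) '' (Set.range Sum.inl)) := by
      apply le_antisymm
      · rw [Submodule.span_le]
        rintro _ ⟨u, hu, rfl⟩
        have hu' : u ∈ Submodule.span F (b '' (Set.range Sum.inl)) := hM ▸ hu
        refine Submodule.span_le.mpr ?_ (one_tmul_mem_span (E := E) hu')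
        rintro _ ⟨_, ⟨j, hj, rfl⟩, rfl⟩
        exact Submodule.subset_span ⟨j, hj, by rw [Basis.baseChange_apply]⟩
      · rw [Submodule.span_le]
        rintro _ ⟨_, ⟨k, rfl⟩, rfl⟩
        refine Submodule.subset_span ⟨b (Sum.inl k), ?_, ?_⟩
        · rw [hbinl]; exact (c k).2
        · rw [Basis.baseChange_apply]
    rw [hspan, Basis.mem_span_image] at hv
    rw [hM, Basis.mem_span_image]
    intro j hj
    apply hv
    rw [Finset.mem_coe, Finsupp.mem_support_iff] at hj ⊢
    rw [Basis.baseChange_repr_tmul]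
    intro hzero
    apply hj
    have h0 : algebraMap F E ((b.repr v) j) = 0 := by
      rw [Algebra.algebraMap_eq_smul_one]; exact hzero
    exact (map_eq_zero_iff (algebraMap F E) (algebraMap F E).injective).mp h0
  · intro hv
    exact Submodule.subset_span ⟨v, hv, rfl⟩

end Aux

/-- Semilinear Galois descent: a Frobenius-stable `E`-subspace `L ⊆ V ⊗ E` is the
base change of a unique `𝔽_q`-subspace `M ⊆ V`, namely `M = L ∩ (V ⊗ 1)`. -/
theorem frobenius_stable_descent
    {F E : Type*} [Field F] [Fintype F] [Field E] [Algebra F E]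
    {V : Type*} [AddCommGroup V] [Module F V] [FiniteDimensional F V]
    (σ : E →ₗ[F] E) (hσ : ∀ x : E, σ x = x ^ Fintype.card F)
    (L : Submodule E (E ⊗[F] V))
    (hL : Submodule.span E (⇑(LinearMap.rTensor V σ) '' (L : Set (E ⊗[F] V))) = L) :
    (∃! M : Submodule F V,
        Submodule.span E ((fun v => (1 : E) ⊗ₜ[F] v) '' (M : Set V)) = L) ∧
    (∀ M : Submodule F V,
        Submodule.span E ((fun v => (1 : E) ⊗ₜ[F] v) '' (M : Set V)) = L →
        (M : Set V) = {v : V | (1 : E) ⊗ₜ[F] v ∈ L}) := by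
  classical
  have hLstab : ∀ z ∈ L, LinearMap.rTensor V σ z ∈ L := fun z hz =>
    hL ▸ Submodule.subset_span (Set.mem_image_of_mem _ hz)
  set M₀ : Submodule F V :=
    (L.restrictScalars F).comap (TensorProduct.mk F E V 1) with hM₀
  have hM₀coe : (M₀ : Set V) = {v : V | (1 : E) ⊗ₜ[F] v ∈ L} := rfl
  -- the easy inclusion
  have le1 : Submodule.span E ((fun v => (1 : E) ⊗ₜ[F] v) '' (M₀ : Set V)) ≤ L := by
    rw [Submodule.span_le]
    rintro _ ⟨v, hv, rfl⟩
    exact hv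
  -- the hard inclusion
  have le2 : L ≤ Submodule.span E ((fun v => (1 : E) ⊗ₜ[F] v) '' (M₀ : Set V)) := by
    by_contra hns
    set πE := M₀.mkQ.baseChange E with hπE
    have hcomm : ∀ z, LinearMap.rTensor (V ⧸ M₀) σ (πE z) = πE (LinearMap.rTensor V σ z) := by
      intro z
      induction z using TensorProduct.induction_on with
      | zero => simp
      | tmul e v => simp [hπE, LinearMap.baseChange_tmul, LinearMap.rTensor_tmul]
      | add a b ha hb => simp only [map_add, ha, hb]
    set Lbar := L.map πE with hLbar
    have hexact : Function.Exact (M₀.subtype.baseChange E) (M₀.mkQ.baseChange E) :=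
      lTensor_exact E (LinearMap.exact_subtype_mkQ M₀) (Submodule.mkQ_surjective M₀)
    have hrange : ∀ u : E ⊗[F] ↥M₀, (M₀.subtype.baseChange E) u ∈
        Submodule.span E ((fun v => (1 : E) ⊗ₜ[F] v) '' (M₀ : Set V)) := by
      intro u
      induction u using TensorProduct.induction_on with
      | zero => simp
      | tmul e m =>
        rw [LinearMap.baseChange_tmul]
        have : e ⊗ₜ[F] (M₀.subtype m) = e • ((1 : E) ⊗ₜ[F] (M₀.subtype m)) := by
          rw [smul_tmul', smul_eq_mul, mul_one]
        rw [this]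
        exact Submodule.smul_mem _ _ (Submodule.subset_span ⟨(m : V), m.2, rfl⟩)
      | add a b ha hb => rw [map_add]; exact Submodule.add_mem _ ha hb
    have hker : ∀ z, πE z = 0 → z ∈
        Submodule.span E ((fun v => (1 : E) ⊗ₜ[F] v) '' (M₀ : Set V)) := by
      intro z hz
      obtain ⟨u, hu⟩ := (hexact z).mp hz
      exact hu ▸ hrange u
    have hne : Lbar ≠ ⊥ := by
      intro hbot
      apply hns
      intro z hz
      have : πE z = 0 := by
        have : πE z ∈ Lbar := Submodule.mem_map_of_mem hz
        rw [hbot] at this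
        simpa using this
      exact hker z this
    have hstab : ∀ y ∈ Lbar, LinearMap.rTensor (V ⧸ M₀) σ y ∈ Lbar := by
      rintro _ ⟨z, hz, rfl⟩
      rw [hcomm]
      exact Submodule.mem_map_of_mem (hLstab z hz)
    obtain ⟨wb, hwb0, hwbL⟩ := exists_one_tmul_mem σ hσ Lbar hstab hne
    obtain ⟨v, rfl⟩ := Submodule.mkQ_surjective M₀ wb
    obtain ⟨z, hzL, hz⟩ := hwbL
    have hπv : πE ((1 : E) ⊗ₜ[F] v) = (1 : E) ⊗ₜ[F] (M₀.mkQ v) :=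
      LinearMap.baseChange_tmul _ _ _
    have hdiff : πE ((1 : E) ⊗ₜ[F] v - z) = 0 := by
      rw [map_sub, hπv, hz, sub_self]
    have h1v : (1 : E) ⊗ₜ[F] v ∈ L := by
      have : (1 : E) ⊗ₜ[F] v = z + ((1 : E) ⊗ₜ[F] v - z) := by abel
      rw [this]
      exact Submodule.add_mem _ hzL (le1 (hker _ hdiff))
    have : M₀.mkQ v = 0 := (Submodule.Quotient.mk_eq_zero M₀).mpr h1v
    exact hwb0 this
  have hspan : Submodule.span E ((fun v => (1 : E) ⊗ₜ[F] v) '' (M₀ : Set V)) = L :=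
    le_antisymm le1 le2
  have bullet2 : ∀ M : Submodule F V,
      Submodule.span E ((fun v => (1 : E) ⊗ₜ[F] v) '' (M : Set V)) = L →
      (M : Set V) = {v : V | (1 : E) ⊗ₜ[F] v ∈ L} := by
    intro M hM
    ext v
    constructor
    · intro hv
      exact hM ▸ Submodule.subset_span ⟨v, hv, rfl⟩
    · intro hv
      exact (mem_span_one_tmul_iff M v).mp (hM.symm ▸ hv)
  refine ⟨⟨M₀, hspan, fun M hM => ?_⟩, bullet2⟩
  exact SetLike.coe_injective ((bullet2 M hM).trans (bullet2 M₀ hspan).symm)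
end

section
/- Let (A_i)_{i ∈ I} be a directed system of commutative rings indexed by a directed set I, where each A_i is a discrete valuation ring, all transition maps A_i → A_j are injective local ring homomorphisms, and there is a fixed element π such that (the image of) π is a uniformizer of every A_i. Then the colimit A = colim_i A_i is a discrete valuation ring with uniformizer (the image of) π. -/
/-- A filtered inductive limit (here: directed union) of discrete valuation rings with a
common uniformizer, along injective local transition maps, is a discrete valuation ring
with the same uniformizer. -/
theorem directed_union_of_dvr_is_dvr
    {A : Type*} [CommRing A] {ι : Type*} [Preorder ι] [IsDirected ι (· ≤ ·)] [Nonempty ι]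
    (R : ι → Subring A) (hmono : ∀ i j, i ≤ j → R i ≤ R j)
    (hunion : ∀ a : A, ∃ i, a ∈ R i)
    (hdom : ∀ i, IsDomain (R i))
    (hdvr : ∀ i, @IsDiscreteValuationRing (R i) _ (hdom i))
    (π : A) (hπ : ∀ i, π ∈ R i)
    (hunif : ∀ i, Irreducible (⟨π, hπ i⟩ : R i))
    (hlocal : ∀ i j (hij : i ≤ j) (x : R i),
      IsUnit (Subring.inclusion (hmono i j hij) x) → IsUnit x) :
    ∃ h : IsDomain A, @IsDiscreteValuationRing A _ h ∧ Irreducible π := by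
  classical
  -- units of a subring are units of A
  have hu : ∀ (i : ι) (x : R i), IsUnit x → IsUnit (x : A) := by
    intro i x hx
    exact hx.map (R i).subtype
  -- A is nontrivial
  haveI : Nontrivial A := by
    obtain ⟨i⟩ := ‹Nonempty ι›
    haveI := hdom i
    refine ⟨0, 1, fun h => ?_⟩
    have : (0 : R i) = 1 := Subtype.ext (by simpa using h)
    exact zero_ne_one this
  -- A has no zero divisors
  haveI : NoZeroDivisors A := by
    refine ⟨fun {a b} hab => ?_⟩
    obtain ⟨i, hi⟩ := hunion a
    obtain ⟨j, hj⟩ := hunion b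
    obtain ⟨k, hik, hjk⟩ := directed_of (· ≤ ·) i j
    haveI := hdom k
    have ha : a ∈ R k := hmono i k hik hi
    have hb : b ∈ R k := hmono j k hjk hj
    have : (⟨a, ha⟩ : R k) * ⟨b, hb⟩ = 0 := Subtype.ext (by simpa using hab)
    rcases mul_eq_zero.mp this with h | h
    · exact Or.inl (by simpa using congrArg Subtype.val h)
    · exact Or.inr (by simpa using congrArg Subtype.val h)
  haveI hA : IsDomain A := NoZeroDivisors.to_isDomain A
  -- π is irreducible in A
  have hπirr : Irreducible π := by
    constructor
    · rintro ⟨u, hu1⟩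
      obtain ⟨i, hi⟩ := hunion (↑u⁻¹ : A)
      haveI := hdom i
      have hmul : (⟨π, hπ i⟩ : R i) * ⟨(↑u⁻¹ : A), hi⟩ = 1 := by
        refine Subtype.ext ?_
        simp [← hu1]
      exact (hunif i).not_isUnit (IsUnit.of_mul_eq_one _ hmul)
    · intro a b hab
      obtain ⟨i, hi⟩ := hunion a
      obtain ⟨j, hj⟩ := hunion b
      obtain ⟨k, hik, hjk⟩ := directed_of (· ≤ ·) i j
      haveI := hdom k
      have ha : a ∈ R k := hmono i k hik hi
      have hb : b ∈ R k := hmono j k hjk hj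
      have : (⟨π, hπ k⟩ : R k) = ⟨a, ha⟩ * ⟨b, hb⟩ := Subtype.ext (by simpa using hab)
      rcases (hunif k).isUnit_or_isUnit this with h | h
      · exact Or.inl (hu k _ h)
      · exact Or.inr (hu k _ h)
  refine ⟨hA, ?_, hπirr⟩
  apply IsDiscreteValuationRing.ofHasUnitMulPowIrreducibleFactorization
  refine ⟨π, hπirr, ?_⟩
  intro x hx
  obtain ⟨i, hi⟩ := hunion x
  haveI := hdom i
  haveI := hdvr i
  have hx' : (⟨x, hi⟩ : R i) ≠ 0 := fun h => hx (by simpa using congrArg Subtype.val h)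
  obtain ⟨n, u, hnu⟩ := IsDiscreteValuationRing.eq_unit_mul_pow_irreducible hx' (hunif i)
  refine ⟨n, ⟨(Units.map (R i).subtype.toMonoidHom u), ?_⟩⟩
  have := congrArg Subtype.val hnu
  simp only [Subring.coe_mul, SubmonoidClass.coe_pow] at this
  rw [mul_comm]
  simpa using this.symm
end

section
/- Let A be a commutative local ring and ψ : M → N a homomorphism between finitely generated free A-modules, with rank N = e. Then ψ has strictly constant rank r (meaning the induced map Λ^{r+1} ψ : Λ^{r+1} M → Λ^{r+1} N is zero and Λ^r ψ is nonzero after base change to the residue field of A — equivalently Λ^r ψ has a unit coefficient) if and only if coker ψ is a free A-module of rank e − r. -/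
open Matrix Finset in
theorem my_det_mul_expand {A : Type*} [CommRing A] {k : ℕ} {J : Type*} [Fintype J] [DecidableEq J]
    (M : Matrix (Fin k) J A) (N : Matrix J (Fin k) A) :
    (M * N).det = ∑ f : Fin k → J, (∏ i, M i (f i)) * (N.submatrix f id).det := by
  have h1 : (M * N).det
      = (detRowAlternating : (Fin k → A) [⋀^Fin k]→ₗ[A] A) (fun i => ∑ j : J, M i j • N j) := by
    congr 1
    ext i x
    simp [Matrix.mul_apply]
  rw [h1]
  have h2 := MultilinearMap.map_sum
    (detRowAlternating : (Fin k → A) [⋀^Fin k]→ₗ[A] A).toMultilinearMap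
    (g := fun i j => M i j • N j)
  refine h2.trans (Finset.sum_congr rfl fun p _ => ?_)
  have h3 := MultilinearMap.map_smul_univ
    (detRowAlternating : (Fin k → A) [⋀^Fin k]→ₗ[A] A).toMultilinearMap
    (fun i => M i (p i)) (fun i => N (p i))
  exact h3.trans (by rw [smul_eq_mul]; rfl)

open Matrix Finset in
theorem my_det_mul_expand' {A : Type*} [CommRing A] {k : ℕ} {J : Type*} [Fintype J] [DecidableEq J]
    (M : Matrix (Fin k) J A) (N : Matrix J (Fin k) A) :
    (M * N).det = ∑ f : Fin k → J, (M.submatrix id f).det * (∏ i, N (f i) i) := by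
  rw [← Matrix.det_transpose, Matrix.transpose_mul, my_det_mul_expand]
  refine Finset.sum_congr rfl fun p _ => ?_
  rw [mul_comm]
  congr 1
  rw [← Matrix.det_transpose]
  rfl

theorem my_isUnit_sum {A : Type*} [CommRing A] [IsLocalRing A] {ι : Type*} (s : Finset ι)
    (f : ι → A) (h : IsUnit (∑ x ∈ s, f x)) : ∃ x ∈ s, IsUnit (f x) := by
  classical
  induction s using Finset.induction_on with
  | empty => simp at h
  | insert _ _ hx ih =>
    rw [Finset.sum_insert hx] at h
    rcases IsLocalRing.isUnit_or_isUnit_of_isUnit_add h with h' | h'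
    · exact ⟨_, Finset.mem_insert_self _ _, h'⟩
    · obtain ⟨y, hy, hy'⟩ := ih h'
      exact ⟨y, Finset.mem_insert_of_mem hy, hy'⟩



open Matrix in
theorem my_extend_equiv {n N : ℕ} (f : Fin n → Fin N) (hf : Function.Injective f) :
    ∃ E : Fin n ⊕ Fin (N - n) ≃ Fin N, ∀ i, E (Sum.inl i) = f i := by
  classical
  have h1 : Fintype.card ↥(Set.range f) = n := by
    rw [Set.card_range_of_injective hf]; simp
  have h2 : Fintype.card ↥(Set.range f)ᶜ = N - n := by
    rw [Fintype.card_compl_set, h1]; simp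
  let c : Fin (N - n) ≃ ↥(Set.range f)ᶜ := (Fintype.equivFinOfCardEq h2).symm
  refine ⟨(Equiv.sumCongr (Equiv.ofInjective f hf) c).trans
    (Equiv.Set.sumCompl (Set.range f)), fun i => ?_⟩
  simp

open Matrix in
theorem my_rank_to_coker_free {A : Type*} [CommRing A] [IsLocalRing A]
    (m e r : ℕ) (P : Matrix (Fin e) (Fin m) A)
    (hv : ∀ (f : Fin (r + 1) → Fin e) (g : Fin (r + 1) → Fin m), (P.submatrix f g).det = 0)
    (f : Fin r → Fin e) (g : Fin r → Fin m) (hu : IsUnit (P.submatrix f g).det) :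
    ∃ s : ℕ, r + s = e ∧
      Nonempty (((Fin e → A) ⧸ LinearMap.range P.mulVecLin) ≃ₗ[A] (Fin s → A)) := by
  classical
  have hf : Function.Injective f := by
    intro a b hab
    by_contra hne
    refine not_isUnit_zero (M₀ := A) ?_
    rw [← Matrix.det_zero_of_row_eq (M := P.submatrix f g) hne (by funext j; simp [hab])]
    exact hu
  have hg : Function.Injective g := by
    intro a b hab
    by_contra hne
    refine not_isUnit_zero (M₀ := A) ?_
    rw [← Matrix.det_zero_of_column_eq (M := P.submatrix f g) hne (by intro j; simp [hab])]
    exact hu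
  obtain ⟨eE, heE⟩ := my_extend_equiv f hf
  obtain ⟨eM, heM⟩ := my_extend_equiv g hg
  set P' : Matrix (Fin r ⊕ Fin (e - r)) (Fin r ⊕ Fin (m - r)) A := P.submatrix eE eM with hP'
  set B := P'.toBlocks₁₁ with hB
  set C := P'.toBlocks₁₂ with hC
  set D := P'.toBlocks₂₁ with hD
  set E := P'.toBlocks₂₂ with hEdef
  have hBfg : B = P.submatrix f g := by
    ext i j
    simp [hB, hP', Matrix.toBlocks₁₁, heE, heM]
  have hdetB : IsUnit B.det := by rw [hBfg]; exact hu
  have : Invertible B := B.invertibleOfIsUnitDet hdetB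
  -- Schur complement vanishes
  have hE : ∀ i j, E i j = (D * ⅟B * C) i j := by
    intro i j
    have hlast : Fin.natAdd r (0 : Fin 1) = Fin.last r := by ext; simp
    set f₁ : Fin (r + 1) → Fin e := Fin.snoc f (eE (Sum.inr i)) with hf₁
    set g₁ : Fin (r + 1) → Fin m := Fin.snoc g (eM (Sum.inr j)) with hg₁
    have h0 : (P.submatrix f₁ g₁).det = 0 := hv f₁ g₁
    rw [← Matrix.det_submatrix_equiv_self (finSumFinEquiv (m := r) (n := 1))] at h0
    have hblk : (P.submatrix f₁ g₁).submatrix finSumFinEquiv finSumFinEquiv =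
        fromBlocks B (Matrix.of fun k (_ : Fin 1) => C k j)
          (Matrix.of fun (_ : Fin 1) k => D i k) (Matrix.of fun (_ : Fin 1) (_ : Fin 1) => E i j) := by
      have hca : ∀ a : Fin r, Fin.castAdd 1 a = a.castSucc := fun a => rfl
      have hna : ∀ b : Fin 1, Fin.natAdd r b = Fin.last r := fun b => by
        ext; simp [Fin.natAdd, Fin.last]
      ext a b
      cases a with
      | inl a => cases b with
        | inl b =>
          simp [hf₁, hg₁, finSumFinEquiv_apply_left, Fin.snoc_castSucc, hB, hP',
            Matrix.toBlocks₁₁, heE, heM, hca, hna]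
        | inr b =>
          simp [hf₁, hg₁, finSumFinEquiv_apply_left, finSumFinEquiv_apply_right,
            Fin.snoc_castSucc, hlast, Fin.snoc_last, hC, hP', Matrix.toBlocks₁₂, heE, hca, hna]
      | inr a => cases b with
        | inl b =>
          simp [hf₁, hg₁, finSumFinEquiv_apply_left, finSumFinEquiv_apply_right,
            Fin.snoc_castSucc, hlast, Fin.snoc_last, hD, hP', Matrix.toBlocks₂₁, heM, hca, hna]
        | inr b =>
          simp [hf₁, hg₁, finSumFinEquiv_apply_right, hlast, Fin.snoc_last, hEdef, hP',
            Matrix.toBlocks₂₂, hca, hna]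
    rw [hblk, Matrix.det_fromBlocks₁₁] at h0
    have hz := (hdetB.mul_right_eq_zero).mp h0
    have h11 : (Matrix.of (fun (_ : Fin 1) (_ : Fin 1) => E i j) -
        Matrix.of (fun (_ : Fin 1) k => D i k) * ⅟B * Matrix.of (fun k (_ : Fin 1) => C k j)).det
        = E i j - (D * ⅟B * C) i j := by
      rw [Matrix.det_fin_one]
      simp [Matrix.sub_apply, Matrix.mul_apply]
    rw [h11] at hz
    exact sub_eq_zero.mp hz
  have hre : r ≤ e := by simpa using Fintype.card_le_of_injective f hf
  -- row and column operations
  set U : Matrix (Fin r ⊕ Fin (e - r)) (Fin r ⊕ Fin (e - r)) A :=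
    fromBlocks 1 0 (-(D * ⅟B)) 1 with hU
  set U' : Matrix (Fin r ⊕ Fin (e - r)) (Fin r ⊕ Fin (e - r)) A :=
    fromBlocks 1 0 (D * ⅟B) 1 with hU'
  set V : Matrix (Fin r ⊕ Fin (m - r)) (Fin r ⊕ Fin (m - r)) A :=
    fromBlocks (⅟B) (-(⅟B * C)) 0 1 with hV
  set V' : Matrix (Fin r ⊕ Fin (m - r)) (Fin r ⊕ Fin (m - r)) A :=
    fromBlocks B C 0 1 with hV'
  have hUU' : U * U' = 1 := by
    rw [hU, hU', Matrix.fromBlocks_multiply, ← Matrix.fromBlocks_one]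
    congr 1 <;> simp
  have hU'U : U' * U = 1 := by
    rw [hU, hU', Matrix.fromBlocks_multiply, ← Matrix.fromBlocks_one]
    congr 1 <;> simp
  have hVV' : V * V' = 1 := by
    rw [hV, hV', Matrix.fromBlocks_multiply, ← Matrix.fromBlocks_one]
    congr 1 <;> simp [Matrix.neg_mul, invOf_mul_self]
  have hV'V : V' * V = 1 := by
    rw [hV, hV', Matrix.fromBlocks_multiply, ← Matrix.fromBlocks_one]
    congr 1 <;> simp [Matrix.mul_neg, ← Matrix.mul_assoc, mul_invOf_self]
  have hP'blocks : P' = fromBlocks B C D E := (P'.fromBlocks_toBlocks).symm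
  have hEeq : E = D * ⅟B * C := by ext i j; exact hE i j
  set F : Matrix (Fin r ⊕ Fin (e - r)) (Fin r ⊕ Fin (m - r)) A :=
    fromBlocks 1 0 0 0 with hF
  have hUPV : U * P' * V = F := by
    rw [hP'blocks, hEeq, hU, hV, hF, Matrix.fromBlocks_multiply, Matrix.fromBlocks_multiply]
    congr 1 <;> simp [Matrix.neg_mul, Matrix.mul_neg, ← Matrix.mul_assoc,
      mul_invOf_self, invOf_mul_self]
  -- linear equivalences
  let ΦU : ((Fin r ⊕ Fin (e - r)) → A) ≃ₗ[A] ((Fin r ⊕ Fin (e - r)) → A) :=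
    LinearEquiv.ofLinear U.mulVecLin U'.mulVecLin
      (by rw [← Matrix.mulVecLin_mul, hUU', Matrix.mulVecLin_one])
      (by rw [← Matrix.mulVecLin_mul, hU'U, Matrix.mulVecLin_one])
  let ΦV : ((Fin r ⊕ Fin (m - r)) → A) ≃ₗ[A] ((Fin r ⊕ Fin (m - r)) → A) :=
    LinearEquiv.ofLinear V.mulVecLin V'.mulVecLin
      (by rw [← Matrix.mulVecLin_mul, hVV', Matrix.mulVecLin_one])
      (by rw [← Matrix.mulVecLin_mul, hV'V, Matrix.mulVecLin_one])
  let ΦE : (Fin e → A) ≃ₗ[A] ((Fin r ⊕ Fin (e - r)) → A) := LinearEquiv.funCongrLeft A A eE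
  let w : (Fin e → A) ≃ₗ[A] ((Fin r ⊕ Fin (e - r)) → A) := ΦE.trans ΦU
  have hw : (w : (Fin e → A) →ₗ[A] ((Fin r ⊕ Fin (e - r)) → A))
      = U.mulVecLin ∘ₗ LinearMap.funLeft A A eE := rfl
  have hmap : Submodule.map (w : (Fin e → A) →ₗ[A] _) (LinearMap.range P.mulVecLin)
      = LinearMap.range F.mulVecLin := by
    have h1 : F.mulVecLin = U.mulVecLin ∘ₗ (P'.mulVecLin ∘ₗ V.mulVecLin) := by
      rw [← hUPV, Matrix.mulVecLin_mul, Matrix.mulVecLin_mul, LinearMap.comp_assoc]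
    have h2 : LinearMap.range (P'.mulVecLin ∘ₗ V.mulVecLin) = LinearMap.range P'.mulVecLin :=
      LinearMap.range_comp_of_range_eq_top _ (LinearMap.range_eq_top.mpr ΦV.surjective)
    have h3 : LinearMap.range P'.mulVecLin
        = Submodule.map (LinearMap.funLeft A A eE) (LinearMap.range P.mulVecLin) := by
      have hsurj : Function.Surjective (LinearMap.funLeft A A (⇑eM.symm)) := fun x =>
        ⟨x ∘ ⇑eM, by funext a; simp [LinearMap.funLeft_apply]⟩
      rw [hP', Matrix.mulVecLin_submatrix, LinearMap.range_comp, LinearMap.range_comp,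
        LinearMap.range_eq_top.mpr hsurj, Submodule.map_top]
    rw [h1, LinearMap.range_comp, h2, h3, hw, ← Submodule.map_comp]
  let E1 := Submodule.Quotient.equiv (LinearMap.range P.mulVecLin)
    (LinearMap.range F.mulVecLin) w hmap
  -- quotient by range F is free
  let qS : ((Fin r ⊕ Fin (e - r)) → A) →ₗ[A] (Fin (e - r) → A) :=
    LinearMap.funLeft A A Sum.inr
  have hFv : ∀ v, F.mulVec v = Sum.elim (v ∘ Sum.inl) 0 := by
    intro v
    rw [hF, Matrix.fromBlocks_mulVec]
    simp
  have hqker : LinearMap.ker qS = LinearMap.range F.mulVecLin := by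
    ext x
    simp only [LinearMap.mem_ker, LinearMap.mem_range]
    constructor
    · intro hx
      refine ⟨Sum.elim (fun a => x (Sum.inl a)) 0, ?_⟩
      rw [Matrix.mulVecLin_apply, hFv]
      funext c
      cases c with
      | inl a => simp
      | inr b =>
        have := congrFun hx b
        simp only [qS, LinearMap.funLeft_apply] at this
        simp [this]
    · rintro ⟨v, rfl⟩
      funext b
      simp [qS, Matrix.mulVecLin_apply, hFv]
  have hq_surj : Function.Surjective qS := fun y => ⟨Sum.elim 0 y, rfl⟩
  refine ⟨e - r, by omega, ⟨E1.trans ((Submodule.quotEquivOfEq _ _ hqker.symm).trans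
    (qS.quotKerEquivOfSurjective hq_surj))⟩⟩



open Matrix LinearMap in
theorem my_coker_free_to_rank {A : Type*} [CommRing A] [IsLocalRing A]
    (m e r s : ℕ) (P : Matrix (Fin e) (Fin m) A) (hrs : r + s = e)
    (h : ((Fin e → A) ⧸ LinearMap.range P.mulVecLin) ≃ₗ[A] (Fin s → A)) :
    (∀ (f : Fin (r + 1) → Fin e) (g : Fin (r + 1) → Fin m), (P.submatrix f g).det = 0) ∧
      (∃ (f : Fin r → Fin e) (g : Fin r → Fin m), IsUnit (P.submatrix f g).det) := by
  classical
  set K : Submodule A (Fin e → A) := LinearMap.range P.mulVecLin with hK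
  let q : (Fin e → A) →ₗ[A] (Fin s → A) := h.toLinearMap ∘ₗ K.mkQ
  have hq_surj : Function.Surjective q :=
    h.surjective.comp (Submodule.mkQ_surjective K)
  have hker : LinearMap.ker q = K := by
    rw [LinearMap.ker_comp, LinearEquiv.ker, Submodule.comap_bot, Submodule.ker_mkQ]
  obtain ⟨σ, hσ⟩ := Module.projective_lifting_property q LinearMap.id hq_surj
  have hσ' : ∀ y, q (σ y) = y := fun y => congrArg (fun f => f y) (congrArg DFunLike.coe hσ)
  -- projection onto K
  let pr0 : (Fin e → A) →ₗ[A] (Fin e → A) := LinearMap.id - σ ∘ₗ q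
  have hpr0 : ∀ x, pr0 x ∈ K := by
    intro x
    rw [← hker, LinearMap.mem_ker]
    simp [pr0, hσ']
  let pr : (Fin e → A) →ₗ[A] K := LinearMap.codRestrict K pr0 hpr0
  have hprK : ∀ x : K, pr (x : Fin e → A) = x := by
    intro x
    apply Subtype.ext
    have hx : q (x : Fin e → A) = 0 := by rw [← LinearMap.mem_ker, hker]; exact x.2
    simp [pr, pr0, hx]
  have hproj : Module.Projective A K :=
    Module.Projective.of_split K.subtype pr (by ext x; simp [hprK])
  have hfin : Module.Finite A K := inferInstance
  haveI := hproj
  haveI : Module.FinitePresentation A K := Module.finitePresentation_of_projective A K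
  haveI : Module.Free A K := Module.free_of_flat_of_isLocalRing
  -- count the rank of K
  let b := Module.Free.chooseBasis A K
  let I := Module.Free.ChooseBasisIndex A K
  -- the equivalence (Fin e → A) ≃ K × (Fin s → A)
  let fwd : (Fin e → A) →ₗ[A] K × (Fin s → A) := LinearMap.prod pr q
  let bwd : K × (Fin s → A) →ₗ[A] (Fin e → A) :=
    K.subtype ∘ₗ LinearMap.fst A K (Fin s → A) + σ ∘ₗ LinearMap.snd A K (Fin s → A)
  have hfb : fwd ∘ₗ bwd = LinearMap.id := by
    refine LinearMap.ext fun p => ?_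
    obtain ⟨k, y⟩ := p
    have hk : q (k : Fin e → A) = 0 := by rw [← LinearMap.mem_ker, hker]; exact k.2
    refine Prod.ext ?_ ?_
    · apply Subtype.ext
      simp [fwd, bwd, pr, pr0, hk, hσ', map_add]
    · simp [fwd, bwd, hk, hσ', map_add]
  have hbf : bwd ∘ₗ fwd = LinearMap.id := by
    refine LinearMap.ext fun x => ?_
    simp [fwd, bwd, pr, pr0]
  let Φ : (Fin e → A) ≃ₗ[A] K × (Fin s → A) := LinearEquiv.ofLinear fwd bwd hfb hbf
  let B1 : Module.Basis (I ⊕ Fin s) A (Fin e → A) :=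
    (b.prod (Pi.basisFun A (Fin s))).map Φ.symm
  have hcard : Fintype.card I + s = e := by
    have := Fintype.card_congr (B1.indexEquiv (Pi.basisFun A (Fin e)))
    simpa using this
  have hcardI : Fintype.card I = r := by omega
  let w : K ≃ₗ[A] (Fin r → A) :=
    (b.reindex (Fintype.equivFinOfCardEq hcardI)).equivFun
  -- factor P through A^r
  let Q' : (Fin r → A) →ₗ[A] (Fin e → A) := K.subtype ∘ₗ w.symm.toLinearMap
  let R' : (Fin m → A) →ₗ[A] (Fin r → A) := w.toLinearMap ∘ₗ P.mulVecLin.rangeRestrict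
  have hQR : Q' ∘ₗ R' = P.mulVecLin := by
    refine LinearMap.ext fun x => ?_
    simp [Q', R']
  let T' : (Fin e → A) →ₗ[A] (Fin r → A) := w.toLinearMap ∘ₗ pr
  have hTQ : T' ∘ₗ Q' = LinearMap.id := by
    refine LinearMap.ext fun x => ?_
    simp [T', Q', hprK]
  have hR'_surj : Function.Surjective R' :=
    w.surjective.comp P.mulVecLin.surjective_rangeRestrict
  obtain ⟨S', hS'⟩ := Module.projective_lifting_property R' LinearMap.id hR'_surj
  -- to matrices
  let Q : Matrix (Fin e) (Fin r) A := LinearMap.toMatrix' Q'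
  let R : Matrix (Fin r) (Fin m) A := LinearMap.toMatrix' R'
  let T : Matrix (Fin r) (Fin e) A := LinearMap.toMatrix' T'
  let S : Matrix (Fin m) (Fin r) A := LinearMap.toMatrix' S'
  have hP : P = Q * R := by
    have := congrArg LinearMap.toMatrix' hQR
    rw [LinearMap.toMatrix'_comp, ← Matrix.toLin'_apply' P, LinearMap.toMatrix'_toLin'] at this
    exact this.symm
  have hTQ1 : T * Q = 1 := by
    have := congrArg LinearMap.toMatrix' hTQ
    rwa [LinearMap.toMatrix'_comp, LinearMap.toMatrix'_id] at this
  have hRS1 : R * S = 1 := by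
    have := congrArg LinearMap.toMatrix' hS'
    rwa [LinearMap.toMatrix'_comp, LinearMap.toMatrix'_id] at this
  constructor
  · -- all (r+1)-minors vanish
    intro f g
    have hsub : P.submatrix f g = (Q.submatrix f _root_.id) * (R.submatrix _root_.id g) := by
      ext i j
      simp [hP, Matrix.mul_apply, Matrix.submatrix_apply]
    rw [hsub, my_det_mul_expand]
    refine Finset.sum_eq_zero fun p _ => ?_
    obtain ⟨i, j, hij, hpij⟩ : ∃ i j, i ≠ j ∧ p i = p j := by
      obtain ⟨i, j, hij, h'⟩ := Fintype.exists_ne_map_eq_of_card_lt p (by simp)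
      exact ⟨i, j, hij, h'⟩
    have : ((R.submatrix _root_.id g).submatrix p _root_.id).det = 0 := by
      apply Matrix.det_zero_of_row_eq hij
      funext x
      simp [Matrix.submatrix_apply, hpij]
    rw [this, mul_zero]
  · -- some r-minor is a unit
    have h1 : IsUnit (T * (P * S)).det := by
      rw [hP, Matrix.mul_assoc Q R S, hRS1, Matrix.mul_one, hTQ1]
      simp
    rw [my_det_mul_expand] at h1
    obtain ⟨f, -, hf⟩ := my_isUnit_sum _ _ h1
    have hf2 : IsUnit ((P * S).submatrix f _root_.id).det := isUnit_of_mul_isUnit_right hf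
    have hsub : (P * S).submatrix f _root_.id = (P.submatrix f _root_.id) * S := by
      ext i j
      simp [Matrix.mul_apply, Matrix.submatrix_apply]
    rw [hsub, my_det_mul_expand'] at hf2
    obtain ⟨g, -, hg⟩ := my_isUnit_sum _ _ hf2
    refine ⟨f, g, ?_⟩
    exact isUnit_of_mul_isUnit_left hg


/-- Over a commutative local ring, a map of finite free modules (given by a matrix `P`)
has strictly constant rank `r` (all `(r+1)×(r+1)` minors vanish and some `r×r` minor is a
unit) iff its cokernel is free of rank `e − r`, where `e` is the rank of the target. -/
theorem strictly_constant_rank_iff_coker_free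
    {A : Type*} [CommRing A] [IsLocalRing A]
    (m e r : ℕ) (P : Matrix (Fin e) (Fin m) A) :
    ((∀ (f : Fin (r + 1) → Fin e) (g : Fin (r + 1) → Fin m), (P.submatrix f g).det = 0) ∧
      (∃ (f : Fin r → Fin e) (g : Fin r → Fin m), IsUnit (P.submatrix f g).det))
    ↔ ∃ s : ℕ, r + s = e ∧
        Nonempty (((Fin e → A) ⧸ LinearMap.range P.mulVecLin) ≃ₗ[A] (Fin s → A)) := by
  constructor
  · rintro ⟨hv, f, g, hu⟩
    exact my_rank_to_coker_free m e r P hv f g hu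
  · rintro ⟨s, hrs, ⟨h⟩⟩
    exact my_coker_free_to_rank m e r s P hrs h
end

section
/- Let A be a commutative local ring and ψ : M → N a homomorphism between finitely generated free A-modules of strictly constant rank r (i.e. Λ^{r+1}ψ = 0 and some r×r minor of ψ is a unit). Then ker ψ and im ψ are free A-modules of ranks rank(M) − r and r respectively, and the short exact sequences 0 → ker ψ → M → im ψ → 0 and 0 → im ψ → N → coker ψ → 0 both split. -/
open Matrix in
/-- Key identity: if all `(r+1)`-minors of `P` vanish and `B = P.submatrix f g` is
invertible, then `P = C * B⁻¹ * R` where `C`, `R` are the corresponding column/row strips. -/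
theorem key_entry_strictly_constant_rank {A : Type*} [CommRing A] (r e m : ℕ)
    (P : Matrix (Fin e) (Fin m) A)
    (f : Fin r → Fin e) (g : Fin r → Fin m) (B : Matrix (Fin r) (Fin r) A)
    [Invertible B] (hB : B = P.submatrix f g)
    (h1 : ∀ (f : Fin (r + 1) → Fin e) (g : Fin (r + 1) → Fin m), (P.submatrix f g).det = 0)
    (i : Fin e) (j : Fin m) :
    (P.submatrix id g * ⅟B * P.submatrix f id) i j = P i j := by
  have h0 := h1 (Fin.snoc f i) (Fin.snoc g j)
  rw [← Matrix.det_submatrix_equiv_self finSumFinEquiv] at h0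
  have hblk : (P.submatrix (Fin.snoc f i) (Fin.snoc g j)).submatrix finSumFinEquiv finSumFinEquiv
      = fromBlocks B (of fun k (_ : Fin 1) => P (f k) j)
          (of fun (_ : Fin 1) l => P i (g l)) (of fun _ _ => P i j) := by
    subst hB
    ext (k|k) (l|l) <;>
      simp [Matrix.fromBlocks, finSumFinEquiv_apply_left, finSumFinEquiv_apply_right,
          Fin.snoc_last, Fin.natAdd, Fin.snoc, Fin.castAdd, Fin.castLE, Fin.castLT]
  rw [hblk, Matrix.det_fromBlocks₁₁, Matrix.det_fin_one] at h0
  have hz := (Matrix.isUnit_det_of_invertible B).mul_right_eq_zero.mp h0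
  rw [Matrix.sub_apply, sub_eq_zero] at hz
  simp only [Matrix.mul_apply, Matrix.of_apply, Finset.univ_unique, Finset.sum_singleton,
    Matrix.submatrix_apply, id_eq] at hz ⊢
  exact hz.symm

/-- Over a commutative local ring, if a map of finite free modules (given by a matrix `P`)
has strictly constant rank `r`, then its kernel and image are free of ranks `m − r` and
`r`, and the sequences `0 → ker → M → im → 0` and `0 → im → N → coker → 0` split. -/
theorem strictly_constant_rank_split
    {A : Type*} [CommRing A] [IsLocalRing A]
    (m e r : ℕ) (P : Matrix (Fin e) (Fin m) A)
    (h1 : ∀ (f : Fin (r + 1) → Fin e) (g : Fin (r + 1) → Fin m), (P.submatrix f g).det = 0)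
    (h2 : ∃ (f : Fin r → Fin e) (g : Fin r → Fin m), IsUnit (P.submatrix f g).det) :
    Nonempty ((LinearMap.ker P.mulVecLin) ≃ₗ[A] (Fin (m - r) → A)) ∧
    Nonempty ((LinearMap.range P.mulVecLin) ≃ₗ[A] (Fin r → A)) ∧
    (∃ p : (Fin m → A) →ₗ[A] LinearMap.ker P.mulVecLin,
      ∀ x : LinearMap.ker P.mulVecLin, p (x : Fin m → A) = x) ∧
    (∃ p : (Fin e → A) →ₗ[A] LinearMap.range P.mulVecLin,
      ∀ x : LinearMap.range P.mulVecLin, p (x : Fin e → A) = x) := by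
  classical
  open Matrix in
  obtain ⟨f, g, hBu⟩ := h2
  set B := P.submatrix f g with hBdef
  have : Invertible B := B.invertibleOfIsUnitDet hBu
  have key : P.submatrix id g * ⅟B * P.submatrix f id = P := by
    ext i j; exact key_entry_strictly_constant_rank r e m P f g B hBdef h1 i j
  set C := P.submatrix id g with hC
  set Rm := P.submatrix f id with hR
  set G : Matrix (Fin m) (Fin r) A := of fun j l => if g l = j then 1 else 0 with hG
  set F' : Matrix (Fin r) (Fin e) A := of fun k i => if f k = i then 1 else 0 with hF
  have hRG : Rm * G = B := by
    ext k l
    simp [Matrix.mul_apply, hG, hR, hBdef, Matrix.submatrix_apply]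
  have hFC : F' * C = B := by
    ext k l
    simp [Matrix.mul_apply, hF, hC, hBdef, Matrix.submatrix_apply]
  set ρ : (Fin m → A) →ₗ[A] (Fin r → A) := ((⅟B) * Rm).mulVecLin with hρ
  set c : (Fin r → A) →ₗ[A] (Fin e → A) := C.mulVecLin with hc
  set s : (Fin r → A) →ₗ[A] (Fin m → A) := G.mulVecLin with hs
  set t : (Fin e → A) →ₗ[A] (Fin r → A) := ((⅟B) * F').mulVecLin with ht
  have hφ : P.mulVecLin = c ∘ₗ ρ := by
    rw [hc, hρ, ← Matrix.mulVecLin_mul, ← Matrix.mul_assoc, key]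
  have hρs : ∀ y, ρ (s y) = y := by
    intro y
    have : ρ ∘ₗ s = LinearMap.id := by
      rw [hρ, hs, ← Matrix.mulVecLin_mul, Matrix.mul_assoc, hRG, invOf_mul_self]
      · exact Matrix.mulVecLin_one
    exact LinearMap.congr_fun this y
  have htc : ∀ y, t (c y) = y := by
    intro y
    have : t ∘ₗ c = LinearMap.id := by
      rw [ht, hc, ← Matrix.mulVecLin_mul, Matrix.mul_assoc, hFC, invOf_mul_self]
      · exact Matrix.mulVecLin_one
    exact LinearMap.congr_fun this y
  have hcinj : Function.Injective c := Function.LeftInverse.injective htc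
  -- kernel equality
  have hkereq : LinearMap.ker P.mulVecLin = LinearMap.ker ρ := by
    ext x
    simp only [LinearMap.mem_ker, hφ, LinearMap.comp_apply]
    constructor
    · intro h
      have := congrArg t h
      rwa [htc, map_zero] at this
    · intro h; rw [h, map_zero]
  -- range equality
  have hrangeeq : LinearMap.range P.mulVecLin = LinearMap.range c := by
    apply le_antisymm
    · rintro _ ⟨y, rfl⟩
      exact ⟨ρ y, by rw [hφ]; rfl⟩
    · rintro _ ⟨z, rfl⟩
      exact ⟨s z, by rw [hφ, LinearMap.comp_apply, hρs]⟩
  -- equiv A^m ≃ ker ρ × A^r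
  have hkmem : ∀ x : Fin m → A, x - s (ρ x) ∈ LinearMap.ker ρ := by
    intro x
    simp [LinearMap.mem_ker, map_sub, hρs]
  let Em : (Fin m → A) ≃ₗ[A] (LinearMap.ker ρ × (Fin r → A)) :=
    { toFun := fun x => (⟨x - s (ρ x), hkmem x⟩, ρ x)
      map_add' := by
        intro x y
        ext <;> simp [map_add] <;> ring_nf <;> abel
      map_smul' := by
        intro a x
        ext <;> simp [_root_.map_smul, smul_sub]
      invFun := fun y => y.1.1 + s y.2
      left_inv := by intro x; simp
      right_inv := by
        rintro ⟨⟨y, hy⟩, z⟩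
        have hy' : ρ y = 0 := hy
        ext <;> simp [map_add, hy', hρs]
      }
  have hfin : Module.Finite A (LinearMap.ker ρ) := by
    refine Module.Finite.of_surjective ((LinearMap.fst A _ _) ∘ₗ Em.toLinearMap) ?_
    rintro ⟨k, hk⟩
    refine ⟨k, ?_⟩
    have hk' : ρ k = 0 := hk
    simp only [LinearMap.comp_apply, LinearEquiv.coe_toLinearMap, LinearMap.fst_apply]
    exact Subtype.ext (by simp [Em, hk'])
  have hproj : Module.Projective A (LinearMap.ker ρ) := by
    refine Module.Projective.of_split (LinearMap.ker ρ).subtype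
      ((LinearMap.fst A _ _) ∘ₗ Em.toLinearMap) ?_
    ext ⟨k, hk⟩
    have hk' : ρ k = 0 := hk
    simp [Em, hk']
  have hfp : Module.FinitePresentation A (LinearMap.ker ρ) :=
    Module.finitePresentation_of_projective A _
  have hfree : Module.Free A (LinearMap.ker ρ) :=
    Module.free_of_flat_of_isLocalRing
  have hrk : Module.finrank A (LinearMap.ker ρ) = m - r := by
    have h3 := Em.finrank_eq
    rw [Module.finrank_prod, Module.finrank_pi, Module.finrank_pi] at h3
    simp only [Fintype.card_fin] at h3
    omega
  refine ⟨?_, ?_, ?_, ?_⟩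
  · -- kernel equiv
    let bb := Module.Free.chooseBasis A (LinearMap.ker ρ)
    have hcard : Fintype.card (Module.Free.ChooseBasisIndex A (LinearMap.ker ρ)) = m - r := by
      rw [← Module.finrank_eq_card_chooseBasisIndex]; exact hrk
    exact ⟨(LinearEquiv.ofEq _ _ hkereq).trans
      (bb.reindex (Fintype.equivFinOfCardEq hcard)).equivFun⟩
  · exact ⟨(LinearEquiv.ofEq _ _ hrangeeq).trans (LinearEquiv.ofInjective c hcinj).symm⟩
  · refine ⟨LinearMap.codRestrict _ (LinearMap.id - s ∘ₗ ρ) (fun x => ?_), fun x => ?_⟩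
    · rw [hkereq]; exact hkmem x
    · have hx0 : P.mulVecLin (x : Fin m → A) = 0 := x.2
      have hx0' : c (ρ (x : Fin m → A)) = 0 := by
        rw [← LinearMap.comp_apply, ← hφ]; exact hx0
      have hx : ρ (x : Fin m → A) = 0 := by
        have := congrArg t hx0'
        rwa [htc, map_zero] at this
      apply Subtype.ext
      simp [LinearMap.codRestrict, hx]
  · refine ⟨LinearMap.codRestrict _ (c ∘ₗ t) (fun x => ?_), fun x => ?_⟩
    · rw [hrangeeq]; exact ⟨t x, rfl⟩
    · obtain ⟨y, hy⟩ := x.2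
      apply Subtype.ext
      have : (x : Fin e → A) = c (ρ y) := by rw [← hy, hφ]; rfl
      simp [LinearMap.codRestrict, this, htc]
end

section
/- Let V be a finite-dimensional vector space over 𝔽_q with dim V ≥ 1, and ψ : 𝔽_q → ℂ^× a nontrivial additive character. Let f : P_V → ℂ be a function on the set of lines of V with ∑_{J ∈ P_V} f(J) = 0. Define g : V → ℂ by g(0) = 0 and g(v) = f(𝔽_q·v) for v ≠ 0. Then for every nonzero linear functional ω : V → 𝔽_q, ∑_{v ∈ V} g(v) ψ(ω(v)) = q · ∑_{J ∈ P_V, J ⊆ ker ω} f(J), and moreover ∑_{v ∈ V} g(v) ψ(0·v) = ∑_{v ∈ V} g(v) = 0. -/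
open Module Finset

/-- Fourier transform of a mean-zero function on lines: for `f` on lines of `V` with
total sum `0`, extended to `g` on `V` by `g(0)=0`, `g(v)=f(𝔽_q·v)`, one has
`∑_v g(v) ψ(ω v) = q · ∑_{lines J ⊆ ker ω} f(J)` for every nonzero functional `ω`,
and `∑_v g(v) = 0`. -/
theorem fourier_of_line_function
    {F : Type*} [Field F] [Fintype F]
    {V : Type*} [AddCommGroup V] [Module F V] [FiniteDimensional F V]
    (hV : 1 ≤ finrank F V)
    (ψ : AddChar F ℂ) (hψ : ∃ a : F, ψ a ≠ 1)
    (f : Submodule F V → ℂ)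
    (hf : ∑ᶠ J ∈ {J : Submodule F V | finrank F ↥J = 1}, f J = 0)
    (g : V → ℂ) (hg0 : g 0 = 0)
    (hg : ∀ v : V, v ≠ 0 → g v = f (Submodule.span F {v})) :
    (∀ ω : V →ₗ[F] F, ω ≠ 0 →
      ∑ᶠ v : V, g v * ψ (ω v) =
        (Fintype.card F : ℂ) *
          ∑ᶠ J ∈ {J : Submodule F V | finrank F ↥J = 1 ∧ J ≤ LinearMap.ker ω}, f J) ∧
    (∑ᶠ v : V, g v = 0) := by
  classical
  haveI : Finite V := Module.finite_of_finite F
  haveI : Fintype V := Fintype.ofFinite V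
  haveI : Finite (Submodule F V) :=
    Finite.of_injective (fun J : Submodule F V => (J : Set V)) SetLike.coe_injective
  haveI : Fintype (Submodule F V) := Fintype.ofFinite _
  set q : ℕ := Fintype.card F with hq
  set L : Finset (Submodule F V) := univ.filter (fun J => finrank F ↥J = 1) with hL
  set fib : Submodule F V → Finset V :=
    fun J => univ.filter (fun v : V => v ≠ 0 ∧ Submodule.span F {v} = J) with hfib
  have hsetL : {J : Submodule F V | finrank F ↥J = 1} = ↑L := by
    ext J; simp [hL]
  have hfL : ∑ J ∈ L, f J = 0 := by
    rw [hsetL, finsum_mem_coe_finset] at hf; exact hf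
  -- every line has a nonzero representative
  have hrep : ∀ J ∈ L, ∃ u : V, u ≠ 0 ∧ J = Submodule.span F {u} := by
    intro J hJ
    have h1 : finrank F ↥J = 1 := by simpa [hL] using hJ
    have hbot : J ≠ ⊥ := by
      intro h; rw [h] at h1; simp [finrank_bot] at h1
    obtain ⟨u, huJ, hu0⟩ := Submodule.exists_mem_ne_zero_of_ne_bot hbot
    refine ⟨u, hu0, ?_⟩
    refine (Submodule.eq_of_le_of_finrank_eq
      ((Submodule.span_singleton_le_iff_mem _ _).2 huJ) ?_).symm
    rw [finrank_span_singleton hu0, h1]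
  -- fibers as images of F \ {0}
  have hfib_eq : ∀ u : V, u ≠ 0 →
      fib (Submodule.span F {u})
        = (univ.filter (fun c : F => c ≠ 0)).image (fun c => c • u) := by
    intro u hu
    ext v
    simp only [hfib, mem_filter, mem_univ, true_and, mem_image]
    constructor
    · rintro ⟨hv0, hsp⟩
      have hvmem : v ∈ Submodule.span F {u} := by
        rw [← hsp]; exact Submodule.mem_span_singleton_self v
      obtain ⟨c, rfl⟩ := Submodule.mem_span_singleton.1 hvmem
      have hc : c ≠ 0 := by
        rintro rfl; exact hv0 (zero_smul F u)
      exact ⟨c, hc, rfl⟩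
    · rintro ⟨c, hc, rfl⟩
      exact ⟨smul_ne_zero hc hu,
        Submodule.span_singleton_smul_eq (isUnit_iff_ne_zero.2 hc) u⟩
  have hfib_sum : ∀ (u : V), u ≠ 0 → ∀ φ : V → ℂ,
      ∑ v ∈ fib (Submodule.span F {u}), φ v
        = ∑ c ∈ univ.filter (fun c : F => c ≠ 0), φ (c • u) := by
    intro u hu φ
    rw [hfib_eq u hu]
    refine Finset.sum_image ?_
    intro c₁ _ c₂ _ h
    exact smul_left_injective F hu h
  -- main rearrangement
  have main : ∀ φ : V → ℂ,
      ∑ v : V, g v * φ v = ∑ J ∈ L, f J * ∑ v ∈ fib J, φ v := by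
    intro φ
    have h0 : ∑ v : V, g v * φ v
        = ∑ v ∈ univ.filter (fun v : V => v ≠ 0), g v * φ v := by
      refine (Finset.sum_filter_of_ne ?_).symm
      intro v _ hne
      rintro rfl
      exact hne (by rw [hg0, zero_mul])
    rw [h0, ← Finset.sum_fiberwise_of_maps_to
      (g := fun v : V => Submodule.span F {v}) (t := L) ?_]
    · refine Finset.sum_congr rfl fun J hJ => ?_
      rw [Finset.filter_filter, Finset.mul_sum]
      have hset : (univ.filter fun v : V => v ≠ 0 ∧ Submodule.span F {v} = J)
          = fib J := by simp [hfib]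
      rw [hset]
      refine Finset.sum_congr rfl fun v hv => ?_
      simp only [hfib, mem_filter, mem_univ, true_and] at hv
      rw [hg v hv.1, hv.2]
    · intro v hv
      simp only [mem_filter, mem_univ, true_and] at hv
      simp [hL, finrank_span_singleton hv]
  have hcard : ((univ.filter (fun c : F => c ≠ 0)).card : ℂ) = (q : ℂ) - 1 := by
    have h1 : (univ.filter (fun c : F => c ≠ 0)) = (univ : Finset F).erase 0 := by
      rw [Finset.filter_ne']
    rw [h1, Finset.card_erase_of_mem (mem_univ 0), card_univ, ← hq,
      Nat.cast_sub Fintype.card_pos, Nat.cast_one]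
  -- character sums over F \ {0}
  have charsum : ∀ a : F,
      ∑ c ∈ univ.filter (fun c : F => c ≠ 0), ψ (c * a)
        = if a = 0 then (q : ℂ) - 1 else -1 := by
    intro a
    by_cases ha : a = 0
    · subst ha
      rw [if_pos rfl]
      simp only [mul_zero, AddChar.map_zero_eq_one]
      rw [Finset.sum_const, nsmul_eq_mul, mul_one, hcard]
    · rw [if_neg ha]
      have h0 : ∑ c : F, ψ (c * a) = 0 := by
        have hne : ψ.mulShift a ≠ 0 := by
          obtain ⟨b, hb⟩ := hψ
          refine AddChar.ne_zero_iff.2 ⟨a⁻¹ * b, ?_⟩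
          simp only [AddChar.mulShift_apply]
          rwa [mul_inv_cancel_left₀ ha]
        have hs := AddChar.sum_eq_zero_iff_ne_zero.2 hne
        calc ∑ c : F, ψ (c * a) = ∑ c : F, ψ.mulShift a c := by
              refine Finset.sum_congr rfl fun c _ => ?_
              rw [AddChar.mulShift_apply, mul_comm]
          _ = 0 := hs
      have hsplit := Finset.sum_erase_add univ (fun c : F => ψ (c * a)) (Finset.mem_univ 0)
      rw [h0] at hsplit
      simp only [zero_mul, AddChar.map_zero_eq_one] at hsplit
      rw [Finset.filter_ne']
      exact eq_neg_of_add_eq_zero_left hsplit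
  constructor
  · intro ω hω
    rw [finsum_eq_sum_of_fintype, main (fun v => ψ (ω v))]
    have hkey : ∀ J ∈ L, (∑ v ∈ fib J, ψ (ω v)) =
        if J ≤ LinearMap.ker ω then (q : ℂ) - 1 else -1 := by
      intro J hJ
      obtain ⟨u, hu0, rfl⟩ := hrep J hJ
      rw [hfib_sum u hu0]
      have hterm : ∀ c : F, ψ (ω (c • u)) = ψ (c * ω u) := by
        intro c; rw [map_smul, smul_eq_mul]
      have hiff : (Submodule.span F {u} ≤ LinearMap.ker ω) ↔ ω u = 0 := by
        rw [Submodule.span_singleton_le_iff_mem, LinearMap.mem_ker]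
      calc ∑ c ∈ univ.filter (fun c : F => c ≠ 0), ψ (ω (c • u))
          = ∑ c ∈ univ.filter (fun c : F => c ≠ 0), ψ (c * ω u) :=
            Finset.sum_congr rfl fun c _ => hterm c
        _ = if ω u = 0 then (q : ℂ) - 1 else -1 := charsum (ω u)
        _ = _ := (if_congr hiff rfl rfl).symm
    calc ∑ J ∈ L, f J * ∑ v ∈ fib J, ψ (ω v)
        = ∑ J ∈ L, ((if J ≤ LinearMap.ker ω then (q : ℂ) * f J else 0) - f J) := by
          refine Finset.sum_congr rfl fun J hJ => ?_
          rw [hkey J hJ]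
          split_ifs with h <;> ring
      _ = (q : ℂ) * ∑ J ∈ L.filter (fun J => J ≤ LinearMap.ker ω), f J
            - ∑ J ∈ L, f J := by
          rw [Finset.sum_sub_distrib, ← Finset.sum_filter, ← Finset.mul_sum]
      _ = (q : ℂ) *
            ∑ᶠ J ∈ {J : Submodule F V | finrank F ↥J = 1 ∧ J ≤ LinearMap.ker ω}, f J := by
          rw [hfL, sub_zero]
          congr 1
          have hset2 : {J : Submodule F V | finrank F ↥J = 1 ∧ J ≤ LinearMap.ker ω}
              = ↑(L.filter (fun J => J ≤ LinearMap.ker ω)) := by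
            ext J; simp [hL]
          rw [hset2, finsum_mem_coe_finset]
  · rw [finsum_eq_sum_of_fintype]
    have h2 := main (fun _ => (1 : ℂ))
    simp only [mul_one] at h2
    rw [h2]
    have hconst : ∀ J ∈ L, (∑ _v ∈ fib J, (1 : ℂ)) = (q : ℂ) - 1 := by
      intro J hJ
      obtain ⟨u, hu0, rfl⟩ := hrep J hJ
      rw [hfib_sum u hu0 (fun _ => 1), Finset.sum_const, nsmul_eq_mul, mul_one, hcard]
    rw [Finset.sum_congr rfl (fun J hJ => by rw [hconst J hJ]), ← Finset.sum_mul, hfL,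
      zero_mul]
end

section
/- Let E be a field containing 𝔽_q, σ the q-power Frobenius, V an 𝔽_q-vector space of dimension N ≥ 3, and 1 ≤ n ≤ N−1. Let τ = id ⊗ σ on V ⊗ E, with τ*L the E-span of τ(L). Let W ⊆ V be a subspace of codimension n, and let L ⊆ V ⊗ E be an n-dimensional toy shtuka (dim L − dim(L ∩ τ*L) ≤ 1) with τ*L ≠ L. If the natural map L → (V/W) ⊗ E is not an isomorphism, then either there exists a hyperplane H ⊆ V with H ⊇ W and L ⊆ H ⊗ E, or there exists a line J ⊆ V with J ⊆ W and J ⊗ E ⊆ L. -/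
open TensorProduct Module

section Aux

variable {F E : Type*} [Field F] [Fintype F] [Field E] [Algebra F E]

/-- fixed points of Frobenius lie in the image of `F`. -/
lemma frob_fixed (x : E) (hx : x ^ Fintype.card F = x) :
    ∃ c : F, algebraMap F E c = x := by
  classical
  set q := Fintype.card F with hq
  have hq2 : 2 ≤ q := Fintype.one_lt_card
  set P : Polynomial E := Polynomial.X ^ q - Polynomial.X with hP
  have h1 : (1:ℕ) ≤ q - 1 := by omega
  have hq1 : q - 1 + 1 = q := by omega
  have hPm : P.Monic := by
    rw [hP, ← hq1]
    exact Polynomial.monic_X_pow_sub (Polynomial.degree_X_le.trans_lt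
      (by exact_mod_cast (show (1:ℕ) < q-1+1 by omega) :
        (1:WithBot ℕ) < ((q-1+1 : ℕ) : WithBot ℕ)))
  have hP0 : P ≠ 0 := hPm.ne_zero
  have hroot : ∀ c : F, Polynomial.IsRoot P (algebraMap F E c) := by
    intro c
    simp only [Polynomial.IsRoot, hP, Polynomial.eval_sub, Polynomial.eval_pow,
      Polynomial.eval_X]
    rw [← map_pow, FiniteField.pow_card, sub_self]
  set s : Finset E := Finset.univ.image (algebraMap F E) with hs
  have hscard : s.card = q := by
    rw [hs, Finset.card_image_of_injective _ (algebraMap F E).injective, Finset.card_univ]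
  have hsub : s ⊆ P.roots.toFinset := by
    intro y hy
    simp only [hs, Finset.mem_image] at hy
    obtain ⟨c, -, rfl⟩ := hy
    rw [Multiset.mem_toFinset, Polynomial.mem_roots hP0]
    exact hroot c
  have hcard : P.roots.toFinset.card ≤ q := by
    refine le_trans (Multiset.toFinset_card_le _) ?_
    have h2 := Polynomial.card_roots' P
    have h3 : P.natDegree ≤ q := by
      rw [hP]
      refine (Polynomial.natDegree_sub_le _ _).trans ?_
      simp [Polynomial.natDegree_X_pow]
      omega
    omega
  have : s = P.roots.toFinset := Finset.eq_of_subset_of_card_le hsub (by omega)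
  have hxroot : x ∈ P.roots.toFinset := by
    rw [Multiset.mem_toFinset, Polynomial.mem_roots hP0]
    simp [Polynomial.IsRoot, hP, hx]
  rw [← this, hs, Finset.mem_image] at hxroot
  obtain ⟨c, -, hc⟩ := hxroot
  exact ⟨c, hc⟩

end Aux

section Aux2

variable {F E : Type*} [Field F] [Fintype F] [Field E] [Algebra F E]
variable {V : Type*} [AddCommGroup V] [Module F V]
variable {σ : E →ₗ[F] E}

set_option linter.unusedSectionVars false

lemma tau_smul (hσ : ∀ x : E, σ x = x ^ Fintype.card F) (e : E) (x : E ⊗[F] V) :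
    LinearMap.rTensor V σ (e • x) =
      e ^ Fintype.card F • LinearMap.rTensor V σ x := by
  induction x using TensorProduct.induction_on with
  | zero => simp
  | tmul a v =>
      rw [smul_tmul', LinearMap.rTensor_tmul, LinearMap.rTensor_tmul, smul_tmul',
        smul_eq_mul, smul_eq_mul, hσ, hσ, mul_pow]
  | add x y hx hy => rw [smul_add, map_add, map_add, hx, hy, smul_add]

lemma tau_one_tmul (hσ : ∀ x : E, σ x = x ^ Fintype.card F) (v : V) :
    LinearMap.rTensor V σ ((1 : E) ⊗ₜ[F] v) = (1 : E) ⊗ₜ[F] v := by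
  rw [LinearMap.rTensor_tmul, hσ, one_pow]

/-- commutation of Frobenius with base-changed maps -/
lemma tau_comm {V' : Type*} [AddCommGroup V'] [Module F V'] (f : V →ₗ[F] V')
    (x : E ⊗[F] V) :
    LinearMap.rTensor V' σ (f.baseChange E x) =
      f.baseChange E (LinearMap.rTensor V σ x) := by
  induction x using TensorProduct.induction_on with
  | zero => simp
  | tmul a v => simp
  | add x y hx hy => rw [map_add, map_add, map_add, map_add, hx, hy]

/-- Frobenius preserves base-changed submodules. -/
lemma tau_mem_baseChange (hσ : ∀ x : E, σ x = x ^ Fintype.card F) (p : Submodule F V) {x : E ⊗[F] V}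
    (hx : x ∈ p.baseChange E) :
    LinearMap.rTensor V σ x ∈ p.baseChange E := by
  rw [Submodule.baseChange_eq_span] at hx ⊢
  induction hx using Submodule.span_induction with
  | mem y hy =>
      obtain ⟨w, hw, rfl⟩ := hy
      rw [TensorProduct.mk_apply, tau_one_tmul hσ]
      exact Submodule.subset_span ⟨w, hw, rfl⟩
  | zero => simp
  | add y z _ _ hy hz => rw [map_add]; exact Submodule.add_mem _ hy hz
  | smul e y _ hy =>
      rw [tau_smul hσ]
      exact Submodule.smul_mem _ _ hy

lemma range_baseChange_subtype (p : Submodule F V) :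
    LinearMap.range ((p.subtype).baseChange E) = p.baseChange E := by
  apply le_antisymm
  · rintro - ⟨y, rfl⟩
    induction y using TensorProduct.induction_on with
    | zero => simp
    | tmul a w =>
        rw [LinearMap.baseChange_tmul]
        exact Submodule.tmul_mem_baseChange_of_mem a w.2
    | add y z hy hz => rw [map_add]; exact Submodule.add_mem _ hy hz
  · rw [Submodule.baseChange_eq_span, Submodule.span_le]
    rintro - ⟨w, hw, rfl⟩
    exact ⟨(1 : E) ⊗ₜ[F] (⟨w, hw⟩ : p), by simp [TensorProduct.mk_apply]⟩

lemma ker_baseChange_mkQ_s14 (p : Submodule F V) :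
    LinearMap.ker ((p.mkQ).baseChange E) = p.baseChange E := by
  have hex : Function.Exact ((p.subtype).baseChange E) ((p.mkQ).baseChange E) := by
    have h1 : Function.Exact (LinearMap.lTensor E p.subtype) (LinearMap.lTensor E p.mkQ) :=
      Module.Flat.lTensor_exact E (LinearMap.exact_subtype_mkQ p)
    intro x
    rw [show ((p.mkQ).baseChange E) x = (LinearMap.lTensor E p.mkQ) x from rfl, h1 x]
    constructor
    · rintro ⟨y, hy⟩; exact ⟨y, hy⟩
    · rintro ⟨y, hy⟩; exact ⟨y, hy⟩
  rw [LinearMap.exact_iff.mp hex, range_baseChange_subtype]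

lemma one_tmul_eq_zero_iff (v : V) : (1 : E) ⊗ₜ[F] v = 0 ↔ v = 0 := by
  constructor
  · intro h
    by_contra hv
    obtain ⟨φ, hφ⟩ : ∃ φ : Module.Dual F V, φ v ≠ 0 := by
      by_contra hc
      push_neg at hc
      exact hv ((Module.forall_dual_apply_eq_zero_iff F v).mp hc)
    have h1 := congrArg (LinearMap.baseChange E φ) h
    rw [LinearMap.baseChange_tmul, map_zero] at h1
    have h2 := congrArg (TensorProduct.rid F E) h1
    rw [TensorProduct.rid_tmul, map_zero] at h2
    rcases smul_eq_zero.mp h2 with h3 | h3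
    · exact hφ h3
    · exact one_ne_zero h3
  · rintro rfl; simp

lemma one_tmul_mem_baseChange_iff (p : Submodule F V) (v : V) :
    (1 : E) ⊗ₜ[F] v ∈ p.baseChange E ↔ v ∈ p := by
  constructor
  · intro h
    have h0 : ((p.mkQ).baseChange E) ((1 : E) ⊗ₜ[F] v) = 0 := by
      rw [← ker_baseChange_mkQ_s14 (E := E) p] at h
      exact h
    rw [LinearMap.baseChange_tmul] at h0
    have := (one_tmul_eq_zero_iff (E := E) (p.mkQ v)).mp h0
    rwa [← Submodule.Quotient.mk_eq_zero]
  · exact fun h => Submodule.tmul_mem_baseChange_of_mem 1 h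

lemma baseChange_map {V' : Type*} [AddCommGroup V'] [Module F V'] (f : V →ₗ[F] V')
    (p : Submodule F V) :
    Submodule.map (f.baseChange E) (p.baseChange E) = (p.map f).baseChange E := by
  rw [Submodule.baseChange_eq_span, Submodule.baseChange_eq_span, Submodule.map_span,
    Submodule.map_coe, Submodule.map_coe]
  congr 1
  rw [Submodule.map_coe, ← Set.image_comp, ← Set.image_comp]
  apply Set.image_congr
  intro w _
  simp

lemma baseChange_mono {p q : Submodule F V} (h : p ≤ q) :
    p.baseChange E ≤ q.baseChange E := by
  rw [Submodule.baseChange_eq_span, Submodule.baseChange_eq_span]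
  exact Submodule.span_mono (Submodule.map_mono h)

lemma span_one_tmul_eq_baseChange (p : Submodule F V) :
    Submodule.span E ((fun v => (1 : E) ⊗ₜ[F] v) '' (p : Set V)) = p.baseChange E := by
  rw [Submodule.baseChange_eq_span, Submodule.map_coe]
  rfl


lemma tau_coords (hσ : ∀ x : E, σ x = x ^ Fintype.card F)
    {ι : Type*} (b : Basis ι F V) (g : ι →₀ E) :
    LinearMap.rTensor V σ ((b.baseChange E).repr.symm g)
      = (b.baseChange E).repr.symm
          (g.mapRange (· ^ Fintype.card F) (zero_pow Fintype.card_ne_zero)) := by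
  classical
  rw [Basis.repr_symm_apply, Basis.repr_symm_apply, Finsupp.linearCombination_apply,
    Finsupp.linearCombination_apply, Finsupp.sum_mapRange_index (fun i => by simp),
    map_finsuppSum]
  apply Finsupp.sum_congr
  intro i _
  rw [tau_smul hσ, Basis.baseChange_apply, tau_one_tmul hσ]

/-- A nonzero Frobenius-stable subspace contains a nonzero vector of the form `1 ⊗ v`. -/
lemma exists_one_tmul_mem_s14 (hσ : ∀ x : E, σ x = x ^ Fintype.card F)
    (U : Submodule E (E ⊗[F] V))
    (hU : ∀ x ∈ U, LinearMap.rTensor V σ x ∈ U)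
    {u : E ⊗[F] V} (hu : u ∈ U) (hu0 : u ≠ 0) :
    ∃ v : V, v ≠ 0 ∧ (1 : E) ⊗ₜ[F] v ∈ U := by
  classical
  set q := Fintype.card F with hqdef
  let b := Basis.ofVectorSpace F V
  let bE := b.baseChange E
  suffices h : ∀ k (g : (Basis.ofVectorSpaceIndex F V : Set V) →₀ E),
      g.support.card ≤ k → g ≠ 0 → bE.repr.symm g ∈ U →
      ∃ v : V, v ≠ 0 ∧ (1 : E) ⊗ₜ[F] v ∈ U by
    refine h (bE.repr u).support.card (bE.repr u) le_rfl ?_ ?_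
    · intro h0
      exact hu0 (by simpa [h0] using (bE.repr.symm_apply_apply u).symm)
    · rw [LinearEquiv.symm_apply_apply]; exact hu
  intro k
  induction k with
  | zero =>
      intro g hcard hg0 _
      exact absurd (Finsupp.card_support_eq_zero.mp (le_antisymm hcard (Nat.zero_le _)))
        hg0
  | succ k ih =>
      intro g hcard hg0 hgU
      obtain ⟨i₀, hi₀⟩ := Finsupp.support_nonempty_iff.mpr hg0
      have hc : g i₀ ≠ 0 := Finsupp.mem_support_iff.mp hi₀
      set g' : (Basis.ofVectorSpaceIndex F V : Set V) →₀ E := (g i₀)⁻¹ • g with hg'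
      have hg'supp : g'.support = g.support :=
        Finsupp.support_smul_eq (inv_ne_zero hc)
      have hg'i₀ : g' i₀ = 1 := by
        rw [hg', Finsupp.smul_apply, smul_eq_mul, inv_mul_cancel₀ hc]
      have hu' : bE.repr.symm g' ∈ U := by
        rw [hg', map_smul]
        exact Submodule.smul_mem _ _ hgU
      have hu'0 : bE.repr.symm g' ≠ 0 := by
        intro h0
        apply hg0
        have : g' = 0 := by
          have := congrArg bE.repr h0
          simpa using this
        rw [hg'] at this
        have := congrArg (fun z => (g i₀) • z) this
        simpa [smul_smul, mul_inv_cancel₀ hc] using this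
      set g'' : (Basis.ofVectorSpaceIndex F V : Set V) →₀ E :=
        g'.mapRange (· ^ q) (zero_pow Fintype.card_ne_zero) - g' with hg''
      have hwU : bE.repr.symm g'' ∈ U := by
        rw [hg'', map_sub]
        exact Submodule.sub_mem _ (by
          rw [← tau_coords hσ]
          exact hU _ hu') hu'
      by_cases hzero : g'' = 0
      · -- all coefficients fixed by Frobenius
        have hfix : ∀ i, (g' i) ^ q = g' i := by
          intro i
          have h0 : g'' i = 0 := by rw [hzero]; rfl
          rw [hg'', Finsupp.sub_apply, Finsupp.mapRange_apply, sub_eq_zero] at h0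
          exact h0
        choose c' hc' using fun i => frob_fixed (F := F) (g' i) (hfix i)
        set v : V := ∑ i ∈ g'.support, c' i • (b i : V) with hv
        have h1v : (1 : E) ⊗ₜ[F] v = bE.repr.symm g' := by
          rw [hv, TensorProduct.tmul_sum, Basis.repr_symm_apply,
            Finsupp.linearCombination_apply, Finsupp.sum]
          apply Finset.sum_congr rfl
          intro i _
          rw [TensorProduct.tmul_smul, ← Basis.baseChange_apply, ← hc' i, algebraMap_smul]
        refine ⟨v, ?_, by rw [h1v]; exact hu'⟩
        intro hv0
        apply hu'0
        rw [← h1v, hv0, TensorProduct.tmul_zero]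
      · -- induction
        apply ih g'' _ hzero hwU
        have hsub : g''.support ⊆ g.support \ {i₀} := by
          intro j hj
          rw [Finset.mem_sdiff, Finset.mem_singleton]
          constructor
          · have := (Finsupp.support_sub (f := g'.mapRange (· ^ q)
              (zero_pow Fintype.card_ne_zero)) (g := g')) hj
            rw [Finset.mem_union] at this
            rcases this with h | h
            · exact hg'supp ▸ Finsupp.support_mapRange h
            · exact hg'supp ▸ h
          · intro hj0
            subst hj0
            apply Finsupp.mem_support_iff.mp hj
            rw [hg'']
            simp [hg'i₀]
        have h1 : (g.support \ {i₀}).card = g.support.card - 1 := by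
          rw [Finset.card_sdiff_of_subset (Finset.singleton_subset_iff.mpr hi₀)]
          simp
        have h2 : 1 ≤ g.support.card := Finset.card_pos.mpr ⟨i₀, hi₀⟩
        have := Finset.card_le_card hsub
        omega

universe uV in
/-- Frobenius-stable subspaces descend to `F`. -/
lemma descent_aux (hσ : ∀ x : E, σ x = x ^ Fintype.card F) :
    ∀ (k : ℕ) {V : Type uV} [AddCommGroup V] [Module F V] [FiniteDimensional F V]
    (U : Submodule E (E ⊗[F] V)), finrank E U ≤ k →
    (∀ x ∈ U, LinearMap.rTensor V σ x ∈ U) →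
    ∃ U₀ : Submodule F V, U = U₀.baseChange E := by
  intro k
  induction k with
  | zero =>
      intro V _ _ _ U hrk _
      refine ⟨⊥, ?_⟩
      rw [Submodule.baseChange_bot]
      exact Submodule.finrank_eq_zero.mp (le_antisymm hrk (Nat.zero_le _))
  | succ k ih =>
      intro V _ _ _ U hrk hU
      by_cases hbot : U = ⊥
      · exact ⟨⊥, by rw [Submodule.baseChange_bot, hbot]⟩
      obtain ⟨u, huU, hu0⟩ := Submodule.exists_mem_ne_zero_of_ne_bot hbot
      obtain ⟨v, hv0, hvU⟩ := exists_one_tmul_mem_s14 hσ U hU huU hu0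
      set J : Submodule F V := Submodule.span F {v} with hJ
      set pE : E ⊗[F] V →ₗ[E] E ⊗[F] (V ⧸ J) := (J.mkQ).baseChange E with hpE
      set U' : Submodule E (E ⊗[F] (V ⧸ J)) := Submodule.map pE U with hU'
      have hJU : J.baseChange E ≤ U := by
        rw [hJ, Submodule.baseChange_span, Submodule.span_le]
        rintro - ⟨w, rfl, rfl⟩
        exact hvU
      have hU'stab : ∀ y ∈ U', LinearMap.rTensor (V ⧸ J) σ y ∈ U' := by
        rintro - ⟨x, hx, rfl⟩
        rw [hpE, tau_comm]
        exact ⟨_, hU x hx, rfl⟩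
      have hrk' : finrank E U' ≤ k := by
        set f : U →ₗ[E] E ⊗[F] (V ⧸ J) := pE.comp U.subtype with hf
        have hrange : LinearMap.range f = U' := by
          rw [hf, LinearMap.range_comp, Submodule.range_subtype]
        have hrn := @LinearMap.finrank_range_add_finrank_ker E U _ (Submodule.addCommGroup U) _ _ _ _ _ f
        have hker : LinearMap.ker f ≠ ⊥ := by
          intro hk
          have hmem : (⟨(1 : E) ⊗ₜ[F] v, hvU⟩ : U) ∈ LinearMap.ker f := by
            rw [LinearMap.mem_ker, hf, LinearMap.comp_apply]
            show pE ((1 : E) ⊗ₜ[F] v) = 0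
            rw [hpE, LinearMap.baseChange_tmul]
            have : J.mkQ v = 0 := by
              rw [← LinearMap.mem_ker, Submodule.ker_mkQ]
              exact Submodule.mem_span_singleton_self v
            rw [this, TensorProduct.tmul_zero]
          rw [hk, Submodule.mem_bot] at hmem
          apply hv0
          have : (1 : E) ⊗ₜ[F] v = (0 : E ⊗[F] V) := congrArg Subtype.val hmem
          exact (one_tmul_eq_zero_iff v).mp this
        have hkpos : 1 ≤ finrank E (LinearMap.ker f) := by
          rcases Nat.eq_zero_or_pos (finrank E (LinearMap.ker f)) with h | h
          · exact absurd ((Submodule.finrank_eq_zero (R := E) (M := U)).mp h) hker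
          · exact h
        rw [hrange] at hrn
        omega
      obtain ⟨U₀', hU₀'⟩ := ih U' hrk' hU'stab
      set U₀ : Submodule F V := U₀'.comap J.mkQ with hU₀
      have hJU₀ : J ≤ U₀ := by
        intro j hj
        rw [hU₀, Submodule.mem_comap]
        have : J.mkQ j = 0 := by
          rw [← LinearMap.mem_ker, Submodule.ker_mkQ]; exact hj
        rw [this]; exact Submodule.zero_mem _
      refine ⟨U₀, le_antisymm ?_ ?_⟩
      · intro x hx
        have hx' : pE x ∈ U₀'.baseChange E := by rw [← hU₀']; exact ⟨x, hx, rfl⟩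
        have hmap : Submodule.map pE (U₀.baseChange E) = U₀'.baseChange E := by
          rw [hpE, baseChange_map, hU₀, Submodule.map_comap_eq_of_surjective
            (Submodule.mkQ_surjective J)]
        rw [← hmap] at hx'
        obtain ⟨z, hz, hzx⟩ := hx'
        have hxz : x - z ∈ J.baseChange E := by
          rw [← ker_baseChange_mkQ_s14 (E := E) J, LinearMap.mem_ker, map_sub, hzx, sub_self]
        have : x - z ∈ U₀.baseChange E := baseChange_mono hJU₀ hxz
        simpa using Submodule.add_mem _ this hz
      · rw [Submodule.baseChange_eq_span, Submodule.span_le]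
        rintro - ⟨w, hw, rfl⟩
        have hw' : J.mkQ w ∈ U₀' := hw
        have h1 : (1 : E) ⊗ₜ[F] (J.mkQ w) ∈ U₀'.baseChange E :=
          Submodule.tmul_mem_baseChange_of_mem 1 hw'
        rw [← hU₀'] at h1
        obtain ⟨x, hx, hxw⟩ := h1
        have hdiff : (1 : E) ⊗ₜ[F] w - x ∈ J.baseChange E := by
          rw [← ker_baseChange_mkQ_s14 (E := E) J, LinearMap.mem_ker, map_sub, hxw]
          rw [show pE ((1 : E) ⊗ₜ[F] w) = (1 : E) ⊗ₜ[F] (J.mkQ w) from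
            LinearMap.baseChange_tmul _ _ _, sub_self]
        have : (1 : E) ⊗ₜ[F] w - x ∈ U := hJU hdiff
        show (1 : E) ⊗ₜ[F] w ∈ U
        simpa using Submodule.add_mem _ this hx

end Aux2

section Aux3

variable {F E : Type*} [Field F] [Fintype F] [Field E] [Algebra F E]
variable {V : Type*} [AddCommGroup V] [Module F V] [FiniteDimensional F V]
variable {σ : E →ₗ[F] E}

set_option linter.unusedSectionVars false

/-- the span of the Frobenius image has dimension at most that of the original space. -/
lemma finrank_span_tau_image_le (hσ : ∀ x : E, σ x = x ^ Fintype.card F)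
    (L : Submodule E (E ⊗[F] V)) :
    finrank E (Submodule.span E (⇑(LinearMap.rTensor V σ) '' (L : Set (E ⊗[F] V))))
      ≤ finrank E L := by
  classical
  set m := finrank E ↥L with hm
  haveI : Module.Free E ↥L := Module.Free.of_divisionRing E L
  let bL := Module.finBasis E ↥L
  set c : Fin m → E ⊗[F] V := fun i => LinearMap.rTensor V σ ((bL i : E ⊗[F] V)) with hc
  have hle : Submodule.span E (⇑(LinearMap.rTensor V σ) '' (L : Set (E ⊗[F] V)))
      ≤ Submodule.span E (Set.range c) := by
    rw [Submodule.span_le]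
    rintro - ⟨x, hx, rfl⟩
    have hxx : x = ∑ i, bL.repr ⟨x, hx⟩ i • ((bL i : ↥L) : E ⊗[F] V) := by
      have := congrArg (Submodule.subtype L) (bL.sum_repr ⟨x, hx⟩).symm
      rw [map_sum] at this
      simpa using this
    rw [hxx, map_sum]
    apply Submodule.sum_mem
    intro i _
    rw [tau_smul hσ]
    exact Submodule.smul_mem _ _ (Submodule.subset_span ⟨i, rfl⟩)
  calc finrank E (Submodule.span E (⇑(LinearMap.rTensor V σ) '' (L : Set (E ⊗[F] V))))
      ≤ finrank E (Submodule.span E (Set.range c)) := Submodule.finrank_mono hle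
    _ ≤ Fintype.card (Fin m) := finrank_range_le_card c
    _ = m := Fintype.card_fin m

end Aux3

open TensorProduct Module

/-- Set-theoretic description of Schubert divisors: if a nontrivial `n`-dimensional toy
shtuka `L` fails to map isomorphically to `(V/W) ⊗ E` for a codimension-`n` subspace
`W ⊆ V`, then `L ⊆ H ⊗ E` for a hyperplane `H ⊇ W` or `J ⊗ E ⊆ L` for a line `J ⊆ W`. -/
theorem schubert_divisor_description
    {F E : Type*} [Field F] [Fintype F] [Field E] [Algebra F E]
    {V : Type*} [AddCommGroup V] [Module F V] [FiniteDimensional F V]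
    (N n : ℕ) (hNV : finrank F V = N) (hN : 3 ≤ N) (hn1 : 1 ≤ n) (hnN : n ≤ N - 1)
    (σ : E →ₗ[F] E) (hσ : ∀ x : E, σ x = x ^ Fintype.card F)
    (W : Submodule F V) (hW : finrank F ↥W = N - n)
    (L : Submodule E (E ⊗[F] V)) (hLn : finrank E ↥L = n)
    (hL : finrank E ↥L -
        finrank E ↥(L ⊓ Submodule.span E
          (⇑(LinearMap.rTensor V σ) '' (L : Set (E ⊗[F] V)))) ≤ 1)
    (hnt : Submodule.span E (⇑(LinearMap.rTensor V σ) '' (L : Set (E ⊗[F] V))) ≠ L)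
    (hniso : ¬ Function.Bijective ⇑(((W.mkQ).baseChange E).comp L.subtype)) :
    (∃ H : Submodule F V, finrank F ↥H = N - 1 ∧ W ≤ H ∧
        L ≤ Submodule.span E ((fun v => (1 : E) ⊗ₜ[F] v) '' (H : Set V))) ∨
    (∃ J : Submodule F V, finrank F ↥J = 1 ∧ J ≤ W ∧
        Submodule.span E ((fun v => (1 : E) ⊗ₜ[F] v) '' (J : Set V)) ≤ L) := by
  classical
  set τ := LinearMap.rTensor V σ with hτ
  set pE : E ⊗[F] V →ₗ[E] E ⊗[F] (V ⧸ W) := (W.mkQ).baseChange E with hpE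
  set φ := pE.comp L.subtype with hφ
  -- dimension bookkeeping
  have hnN' : n < N := by omega
  have hVW : finrank F (V ⧸ W) = n := by
    have := Submodule.finrank_quotient_add_finrank W
    omega
  have hEVW : finrank E (E ⊗[F] (V ⧸ W)) = n := by
    rw [Module.finrank_baseChange, hVW]
  have hfr : finrank E ↥L = finrank E (E ⊗[F] (V ⧸ W)) := by rw [hLn, hEVW]
  have hninj : ¬ Function.Injective ⇑φ := fun h => hniso ⟨h,
    (@LinearMap.injective_iff_surjective_of_finrank_eq_finrank E L _ (Submodule.addCommGroup L) _ _ _ _ _ _ hfr).mp h⟩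
  -- the kernel K is nonzero
  set K := L ⊓ W.baseChange E with hK
  have hKL : K ≤ L := inf_le_left
  have hKW : K ≤ W.baseChange E := inf_le_right
  have hKne : K ≠ ⊥ := by
    have hker : LinearMap.ker φ ≠ ⊥ := fun h => hninj ((LinearMap.ker_eq_bot (M := L)).mp h)
    obtain ⟨x, hxk, hx0⟩ := Submodule.exists_mem_ne_zero_of_ne_bot hker
    intro hb
    have hxK : (x : E ⊗[F] V) ∈ K := by
      refine Submodule.mem_inf.mpr ⟨x.2, ?_⟩
      rw [← ker_baseChange_mkQ_s14 (E := E) W, LinearMap.mem_ker]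
      exact hxk
    rw [hb, Submodule.mem_bot] at hxK
    exact hx0 (Subtype.ext hxK)
  by_cases hdich : Submodule.span E (⇑τ '' (K : Set (E ⊗[F] V))) ≤ L
  · -- line case
    right
    have hstab : ∀ x ∈ K, τ x ∈ K := by
      intro x hx
      refine Submodule.mem_inf.mpr ⟨hdich (Submodule.subset_span ⟨x, hx, rfl⟩), ?_⟩
      exact tau_mem_baseChange hσ W (hKW hx)
    obtain ⟨K₀, hK₀⟩ := descent_aux hσ (finrank E ↥K) K le_rfl hstab
    have hK₀ne : K₀ ≠ ⊥ := by
      intro h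
      exact hKne (by rw [hK₀, h, Submodule.baseChange_bot])
    obtain ⟨v, hvK₀, hv0⟩ := Submodule.exists_mem_ne_zero_of_ne_bot hK₀ne
    have h1v : (1 : E) ⊗ₜ[F] v ∈ K := by
      rw [hK₀]; exact Submodule.tmul_mem_baseChange_of_mem 1 hvK₀
    refine ⟨Submodule.span F {v}, finrank_span_singleton hv0, ?_, ?_⟩
    · rw [Submodule.span_le, Set.singleton_subset_iff]
      exact (one_tmul_mem_baseChange_iff W v).mp (hKW h1v)
    · rw [span_one_tmul_eq_baseChange, Submodule.baseChange_span, Submodule.span_le]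
      rintro - ⟨w, rfl, rfl⟩
      exact hKL h1v
  · -- hyperplane case
    left
    obtain ⟨x, hxTK, hxL⟩ := SetLike.not_le_iff_exists.mp hdich
    set TL := Submodule.span E (⇑τ '' (L : Set (E ⊗[F] V))) with hTL
    set A := L ⊓ TL with hA
    have hAL : A ≤ L := inf_le_left
    have hATL : A ≤ TL := inf_le_right
    have hfA : finrank E ↥A ≤ n := hLn ▸ Submodule.finrank_mono hAL
    have hfA' : n - finrank E ↥A ≤ 1 := hLn ▸ hL
    have hTKTL : Submodule.span E (⇑τ '' (K : Set (E ⊗[F] V))) ≤ TL :=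
      Submodule.span_mono (Set.image_mono hKL)
    have hTKW : Submodule.span E (⇑τ '' (K : Set (E ⊗[F] V))) ≤ W.baseChange E := by
      rw [Submodule.span_le]
      rintro - ⟨y, hy, rfl⟩
      exact tau_mem_baseChange hσ W (hKW hy)
    have hfTL : finrank E ↥TL ≤ n := hLn ▸ finrank_span_tau_image_le hσ L
    set B := A ⊔ Submodule.span E {x} with hB
    have hBTL : B ≤ TL := sup_le hATL
      (by rw [Submodule.span_le, Set.singleton_subset_iff]; exact hTKTL hxTK)
    have hxA : x ∉ A := fun h => hxL (hAL h)
    have hxB : x ∈ B := Submodule.mem_sup_right (Submodule.mem_span_singleton_self x)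
    have hAB : A < B := lt_of_le_of_ne le_sup_left (fun h => hxA (h ▸ hxB))
    have hfB : n ≤ finrank E ↥B := by
      have := Submodule.finrank_lt_finrank_of_lt hAB
      omega
    have hBeq : B = TL := Submodule.eq_of_le_of_finrank_le hBTL (le_trans hfTL hfB)
    set M := Submodule.map pE L with hM
    have hMstab : ∀ y ∈ M, LinearMap.rTensor (V ⧸ W) σ y ∈ M := by
      rintro - ⟨u, hu, rfl⟩
      rw [hpE, tau_comm]
      have hτu : τ u ∈ TL := Submodule.subset_span ⟨u, hu, rfl⟩
      rw [← hBeq, hB] at hτu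
      obtain ⟨a, ha, z, hz, hsum⟩ := Submodule.mem_sup.mp hτu
      obtain ⟨e, rfl⟩ := Submodule.mem_span_singleton.mp hz
      have hpx : pE x = 0 := by
        rw [← LinearMap.mem_ker, ker_baseChange_mkQ_s14 (E := E) W]
        exact hTKW hxTK
      rw [← hsum, map_add, map_smul, hpx, smul_zero, add_zero]
      exact ⟨a, hAL ha, rfl⟩
    obtain ⟨M₀, hM₀⟩ := descent_aux hσ (finrank E ↥M) M le_rfl hMstab
    have hM₀top : M₀ ≠ ⊤ := by
      intro h
      rw [h, Submodule.baseChange_top] at hM₀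
      apply hniso
      have hsurj : Function.Surjective ⇑φ := by
        rw [← LinearMap.range_eq_top, hφ, LinearMap.range_comp, Submodule.range_subtype]
        exact hM₀
      exact ⟨(@LinearMap.injective_iff_surjective_of_finrank_eq_finrank E L _ (Submodule.addCommGroup L) _ _ _ _ _ _ hfr).mpr hsurj, hsurj⟩
    obtain ⟨v', hv'⟩ : ∃ v', v' ∉ M₀ := by
      by_contra hc
      push_neg at hc
      exact hM₀top (Submodule.eq_top_iff'.mpr hc)
    have hne : M₀.mkQ v' ≠ 0 := by
      rw [Ne, Submodule.mkQ_apply, Submodule.Quotient.mk_eq_zero]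
      exact hv'
    obtain ⟨gd, hgd⟩ : ∃ gd : Module.Dual F ((V ⧸ W) ⧸ M₀), gd (M₀.mkQ v') ≠ 0 := by
      by_contra hc
      push_neg at hc
      exact hne ((Module.forall_dual_apply_eq_zero_iff F _).mp hc)
    set f : Module.Dual F (V ⧸ W) := gd ∘ₗ M₀.mkQ with hf
    set g : Module.Dual F V := f ∘ₗ W.mkQ with hg
    set H := LinearMap.ker g with hH
    have hM₀f : M₀ ≤ LinearMap.ker f := by
      intro y hy
      rw [LinearMap.mem_ker, hf, LinearMap.comp_apply]
      have : M₀.mkQ y = 0 := by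
        rw [Submodule.mkQ_apply, Submodule.Quotient.mk_eq_zero]; exact hy
      rw [this, map_zero]
    have hWH : W ≤ H := by
      intro w hw
      rw [hH, LinearMap.mem_ker, hg, LinearMap.comp_apply]
      have : W.mkQ w = 0 := by
        rw [Submodule.mkQ_apply, Submodule.Quotient.mk_eq_zero]; exact hw
      rw [this, map_zero]
    have hfrH : finrank F ↥H = N - 1 := by
      have hrn := LinearMap.finrank_range_add_finrank_ker g
      have hsurj : Function.Surjective ⇑g := by
        obtain ⟨v'', hv''⟩ := Submodule.mkQ_surjective W v'
        have hgv : g v'' ≠ 0 := by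
          rw [hg, LinearMap.comp_apply, hv'']
          exact hgd
        intro c
        refine ⟨(c * (g v'')⁻¹) • v'', ?_⟩
        rw [map_smul, smul_eq_mul, mul_assoc, inv_mul_cancel₀ hgv, mul_one]
      rw [LinearMap.range_eq_top.mpr hsurj, finrank_top, Module.finrank_self, hNV,
        ← hH] at hrn
      omega
    refine ⟨H, hfrH, hWH, ?_⟩
    rw [span_one_tmul_eq_baseChange]
    intro u hu
    have hMu : pE u ∈ (LinearMap.ker f).baseChange E := by
      have : pE u ∈ M := ⟨u, hu, rfl⟩
      rw [hM₀] at this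
      exact baseChange_mono hM₀f this
    have hmapH : Submodule.map W.mkQ H = LinearMap.ker f := by
      rw [hH, hg, LinearMap.ker_comp, Submodule.map_comap_eq_of_surjective
        (Submodule.mkQ_surjective W)]
    have hmapHE : Submodule.map pE (H.baseChange E) = (LinearMap.ker f).baseChange E := by
      rw [hpE, baseChange_map, hmapH]
    rw [← hmapHE] at hMu
    obtain ⟨z, hz, hzu⟩ := hMu
    have hdiff : u - z ∈ W.baseChange E := by
      rw [← ker_baseChange_mkQ_s14 (E := E) W, LinearMap.mem_ker, map_sub, hzu, sub_self]
    have : u - z ∈ H.baseChange E := baseChange_mono hWH hdiff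
    simpa using Submodule.add_mem _ this hz
end
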